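/- arXiv:2008.09002 — 3 statements merged into one kernel-verified Lean document; each statement's English description precedes it below -/
import Mathlib

section
/- Let T be a tree with at least three vertices, maximum degree at most 4, and no vertex of degree 2. If T has no splitter, then T is a 4-caterpillar, i.e., the non-leaf vertices of T form the vertex set of a path in T (and each has degree 3 or 4). -/
open SimpleGraph

namespace TurnRegular

/-- Degree of a vertex: the cardinality of its neighbor set. -/
noncomputable def deg {V : Type*} (G : SimpleGraph V) (v : V) : ℕ :=
  (G.neighborSet v).ncard

/-- A splitter: a vertex adjacent to at least three non-leaf vertices. -/
def IsSplitter {V : Type*} (G : SimpleGraph V) (v : V) : Prop :=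
  3 ≤ {u | G.Adj v u ∧ 2 ≤ deg G u}.ncard

/-- A `k`-fork: a vertex of degree exactly `k+1` adjacent to at least `k` leaves. -/
def IsKFork {V : Type*} (k : ℕ) (G : SimpleGraph V) (v : V) : Prop :=
  deg G v = k + 1 ∧ k ≤ {u | G.Adj v u ∧ deg G u = 1}.ncard

/-- A `k`-caterpillar: a tree with at least three vertices whose non-leaf vertices
form the vertex set of a path, every non-leaf vertex having degree between `3` and `k`. -/
def IsKCaterpillar (k : ℕ) {W : Type*} (G : SimpleGraph W) : Prop :=
  G.IsTree ∧ 3 ≤ Nat.card W ∧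
  (∃ (a b : W) (p : G.Walk a b), p.IsPath ∧ ∀ v, 2 ≤ deg G v ↔ v ∈ p.support) ∧
  (∀ v, 2 ≤ deg G v → 3 ≤ deg G v ∧ deg G v ≤ k)

/-- The vertex set of the connected component of `G - v` containing `u`
(for `u ≠ v`): all vertices reachable from `u` by a walk avoiding `v`. -/
def compAway {V : Type*} (G : SimpleGraph V) (v u : V) : Set V :=
  {w | ∃ p : G.Walk u w, v ∉ p.support}

/-- Vertex set of the branch of `G` at `v` through the component of `G - v`
containing `u`. -/
def branchVerts {V : Type*} (G : SimpleGraph V) (v u : V) : Set V :=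
  insert v (compAway G v u)

/-- The branch of `G` at `v` through the component of `G - v` containing `u`:
the subgraph induced on `{v} ∪ C`. -/
def branch {V : Type*} (G : SimpleGraph V) (v u : V) :
    SimpleGraph (branchVerts G v u) :=
  G.induce (branchVerts G v u)

/-- A 4-windmill: a tree of maximum degree at most 4 with exactly one splitter `v`,
such that `v` has degree 4 and each of the four branches at `v` is a 3-caterpillar. -/
def Is4Windmill {V : Type*} (G : SimpleGraph V) : Prop :=
  G.IsTree ∧ (∀ w, deg G w ≤ 4) ∧
  ∃ v, (∀ w, IsSplitter G w ↔ w = v) ∧ deg G v = 4 ∧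
    ∀ u, G.Adj v u → IsKCaterpillar 3 (branch G v u)

/-- A 3-windmill: a tree of maximum degree at most 4 with exactly one splitter `v`,
such that `v` has exactly three non-leaf neighbors, every other neighbor of `v`
is a leaf, and among the three branches at `v` through the components containing
the non-leaf neighbors, two are 3-caterpillars and one is a 4-caterpillar. -/
def Is3Windmill {V : Type*} (G : SimpleGraph V) : Prop :=
  G.IsTree ∧ (∀ w, deg G w ≤ 4) ∧
  ∃ v, (∀ w, IsSplitter G w ↔ w = v) ∧
    ∃ u₁ u₂ u₃, u₁ ≠ u₂ ∧ u₁ ≠ u₃ ∧ u₂ ≠ u₃ ∧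
      G.Adj v u₁ ∧ G.Adj v u₂ ∧ G.Adj v u₃ ∧
      2 ≤ deg G u₁ ∧ 2 ≤ deg G u₂ ∧ 2 ≤ deg G u₃ ∧
      (∀ u, G.Adj v u → 2 ≤ deg G u → u = u₁ ∨ u = u₂ ∨ u = u₃) ∧
      (∀ u, G.Adj v u → u ≠ u₁ → u ≠ u₂ → u ≠ u₃ → deg G u = 1) ∧
      IsKCaterpillar 3 (branch G v u₁) ∧ IsKCaterpillar 3 (branch G v u₂) ∧
      IsKCaterpillar 4 (branch G v u₃)

/-- A double-windmill: a tree of maximum degree at most 4 with exactly two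
splitters `u` and `v` such that (i) every vertex strictly between `u` and `v`
on the `u`–`v` path is adjacent, apart from its neighbors on the path, only
to leaves; (ii) each of `u` and `v` has exactly three non-leaf neighbors and
every other neighbor is a leaf; (iii) for each of `u` and `v`, the two branches
at it through the components that contain one of its non-leaf neighbors but not
the other splitter are 3-caterpillars. -/
def IsDoubleWindmill {V : Type*} (G : SimpleGraph V) : Prop :=
  G.IsTree ∧ (∀ w, deg G w ≤ 4) ∧
  ∃ u v, u ≠ v ∧ (∀ w, IsSplitter G w ↔ (w = u ∨ w = v)) ∧
    (∀ p : G.Walk u v, p.IsPath →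
      ∀ w ∈ p.support, w ≠ u → w ≠ v →
        ∀ x, G.Adj w x → x ∉ p.support → deg G x = 1) ∧
    {x | G.Adj u x ∧ 2 ≤ deg G x}.ncard = 3 ∧
    {x | G.Adj v x ∧ 2 ≤ deg G x}.ncard = 3 ∧
    (∀ x, G.Adj u x → deg G x = 1 ∨ 2 ≤ deg G x) ∧
    (∀ x, G.Adj v x → deg G x = 1 ∨ 2 ≤ deg G x) ∧
    (∀ x, G.Adj u x → 2 ≤ deg G x → v ∉ branchVerts G u x →
      IsKCaterpillar 3 (branch G u x)) ∧
    (∀ x, G.Adj v x → 2 ≤ deg G x → u ∉ branchVerts G v x →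
      IsKCaterpillar 3 (branch G v x))

/-- The closed axis-parallel ray starting at `p` and passing through `q`
(extended to infinity beyond `q`). -/
def ray (p q : ℝ × ℝ) : Set (ℝ × ℝ) :=
  {x | ∃ t : ℝ, 0 ≤ t ∧ x = p + t • (q - p)}

/-- A rectilinear planar drawing of `G`: an injective placement of the vertices
in the plane such that each edge is a horizontal or vertical segment, and the
segments of two distinct edges meet at most in the image of a common endpoint. -/
def IsRectDrawing {V : Type*} (G : SimpleGraph V) (Γ : V → ℝ × ℝ) : Prop :=
  Function.Injective Γ ∧
  (∀ u v, G.Adj u v → (Γ u).1 = (Γ v).1 ∨ (Γ u).2 = (Γ v).2) ∧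
  (∀ u v x y, G.Adj u v → G.Adj x y → s(u, v) ≠ s(x, y) →
    ∀ p ∈ segment ℝ (Γ u) (Γ v) ∩ segment ℝ (Γ x) (Γ y),
      ∃ w, (w = u ∨ w = v) ∧ (w = x ∨ w = y) ∧ p = Γ w)

/-- The drawn point set of edge `{a, b}` in the drawing `Γ`: its segment, where
the edge is extended beyond each leaf endpoint to an infinite axis-parallel ray. -/
noncomputable def edgeDrawn {V : Type*} (G : SimpleGraph V) (Γ : V → ℝ × ℝ)
    (a b : V) : Set (ℝ × ℝ) :=
  (if deg G b = 1 then ray (Γ a) (Γ b) else segment ℝ (Γ a) (Γ b)) ∪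
  (if deg G a = 1 then ray (Γ b) (Γ a) else segment ℝ (Γ a) (Γ b))

/-- A convex rectilinear planar drawing: a rectilinear planar drawing in which,
after extending every edge incident to a leaf beyond that leaf to an infinite
axis-parallel ray, the resulting point sets of two distinct edges still meet at
most in the image of a common endpoint. -/
def IsConvexRectDrawing {V : Type*} (G : SimpleGraph V) (Γ : V → ℝ × ℝ) : Prop :=
  IsRectDrawing G Γ ∧
  (∀ u v x y, G.Adj u v → G.Adj x y → s(u, v) ≠ s(x, y) →
    ∀ p ∈ edgeDrawn G Γ u v ∩ edgeDrawn G Γ x y,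
      ∃ w, (w = u ∨ w = v) ∧ (w = x ∨ w = y) ∧ p = Γ w)

/-- `G` admits a convex rectilinear planar drawing. -/
def HasConvexDrawing {V : Type*} (G : SimpleGraph V) : Prop :=
  ∃ Γ : V → ℝ × ℝ, IsConvexRectDrawing G Γ

section Helpers

set_option linter.unusedSectionVars false

variable {V : Type*} [Fintype V] {G : SimpleGraph V}

lemma two_le_deg {v x y : V} (hxy : x ≠ y) (hx : G.Adj v x) (hy : G.Adj v y) :
    2 ≤ deg G v := by
  have : 1 < (G.neighborSet v).ncard := by
    rw [Set.one_lt_ncard (Set.toFinite _)]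
    exact ⟨x, hx, y, hy, hxy⟩
  rw [deg]; omega

lemma exists_snd {v c : V} (r : G.Walk v c) (h : v ≠ c) :
    ∃ y, G.Adj v y ∧ y ∈ r.support.tail := by
  cases r with
  | nil => exact absurd rfl h
  | cons h' t => exact ⟨_, h', by simp [t.start_mem_support]⟩

lemma exists_penult {v x : V} (r : G.Walk v x) (hr : r.IsPath) (h : v ≠ x) :
    ∃ y, G.Adj x y ∧ y ∈ r.support ∧ y ≠ x := by
  obtain ⟨y, hadj, hmem⟩ := exists_snd r.reverse (Ne.symm h)
  have h1 : y ∈ r.support := by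
    have := List.mem_of_mem_tail hmem
    rwa [Walk.support_reverse, List.mem_reverse] at this
  have h2 : y ≠ x := by
    have hnd := hr.reverse.2
    rw [r.reverse.support_eq_cons] at hnd
    exact fun hc => (List.nodup_cons.mp hnd).1 (hc ▸ hmem)
  exact ⟨y, hadj, h1, h2⟩

lemma internal_two_nbrs {a b v : V} (p : G.Walk a b) (hp : p.IsPath)
    (hv : v ∈ p.support) (hva : v ≠ a) (hvb : v ≠ b) :
    ∃ n₁ n₂, n₁ ≠ n₂ ∧ G.Adj v n₁ ∧ G.Adj v n₂ ∧ n₁ ∈ p.support ∧ n₂ ∈ p.support := by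
  classical
  set q := p.takeUntil v hv with hq
  set r := p.dropUntil v hv with hr
  obtain ⟨n₂, hn₂adj, hn₂mem⟩ := exists_snd r hvb
  obtain ⟨n₁, hn₁adj, hn₁mem⟩ := exists_snd q.reverse (hva)
  have hn₁q : n₁ ∈ q.support := by
    have := List.mem_of_mem_tail hn₁mem
    rwa [Walk.support_reverse, List.mem_reverse] at this
  have hnodup : (q.support ++ r.support.tail).Nodup := by
    have := hp.2
    rwa [← p.take_spec hv, Walk.support_append] at this
  have hdisj := (List.nodup_append'.mp hnodup).2.2
  have hne : n₁ ≠ n₂ := fun h => hdisj hn₁q (h ▸ hn₂mem)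
  exact ⟨n₁, n₂, hne, hn₁adj, hn₂adj,
    p.support_takeUntil_subset hv hn₁q,
    p.support_dropUntil_subset hv (List.mem_of_mem_tail hn₂mem)⟩

lemma support_two_le_deg {a b v : V} (p : G.Walk a b) (hp : p.IsPath)
    (hv : v ∈ p.support) (ha : 2 ≤ deg G a) (hb : 2 ≤ deg G b) :
    2 ≤ deg G v := by
  by_cases hva : v = a
  · exact hva ▸ ha
  by_cases hvb : v = b
  · exact hvb ▸ hb
  obtain ⟨n₁, n₂, hne, h1, h2, _, _⟩ := internal_two_nbrs p hp hv hva hvb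
  exact two_le_deg hne h1 h2

lemma first_hit {u a : V} (q : G.Walk u a) (P : Set V) (hq : q.IsPath) (ha : a ∈ P) :
    ∃ x, x ∈ P ∧ ∃ r : G.Walk u x, r.IsPath ∧ (∀ y ∈ r.support, y ∈ q.support) ∧
      (∀ y ∈ r.support, y ≠ x → y ∉ P) := by
  classical
  induction q with
  | nil =>
    exact ⟨_, ha, Walk.nil, Walk.IsPath.nil, by simp, by simp⟩
  | @cons u u₂ a h q' ih =>
    by_cases hu : u ∈ P
    · exact ⟨_, hu, Walk.nil, Walk.IsPath.nil, by simp, by simp⟩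
    · obtain ⟨hq', huq'⟩ := (Walk.cons_isPath_iff h q').mp hq
      obtain ⟨x, hxP, r', hr', hsub, havoid⟩ := ih hq' ha
      refine ⟨x, hxP, Walk.cons h r', ?_, ?_, ?_⟩
      · exact (Walk.cons_isPath_iff h r').mpr ⟨hr', fun hc => huq' (hsub _ hc)⟩
      · intro y hy
        rw [Walk.support_cons, List.mem_cons] at hy
        rcases hy with rfl | hy
        · simp
        · simp [hsub _ hy]
      · intro y hy hyx
        rw [Walk.support_cons, List.mem_cons] at hy
        rcases hy with rfl | hy
        · exact hu
        · exact havoid _ hy hyx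

lemma path_length_eq_dist (htree : G.IsTree) {u v : V} (p : G.Walk u v) (hp : p.IsPath) :
    p.length = G.dist u v := by
  obtain ⟨p', hp', hl'⟩ := htree.isConnected.exists_path_of_dist u v
  have : (⟨p, hp⟩ : G.Path u v) = ⟨p', hp'⟩ := htree.IsAcyclic.path_unique _ _
  rw [show p = p' from congrArg Subtype.val this, hl']

lemma append_dist (htree : G.IsTree) {v x b' : V} (r : G.Walk v x) (p' : G.Walk x b')
    (hr : r.IsPath) (hp' : p'.IsPath)
    (havoid : ∀ y ∈ r.support, y ≠ x → y ∉ p'.support) (hvx : v ≠ x) :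
    G.dist x b' + 1 ≤ G.dist v b' := by
  have hpath : (r.append p').IsPath := by
    rw [Walk.isPath_def, Walk.support_append, List.nodup_append']
    refine ⟨hr.2, (List.tail_sublist _).nodup hp'.2, ?_⟩
    intro z hz hz'
    have hzp : z ∈ p'.support := List.mem_of_mem_tail hz'
    by_cases hzx : z = x
    · subst hzx
      have hnd := hp'.2
      rw [p'.support_eq_cons] at hnd
      exact (List.nodup_cons.mp hnd).1 hz'
    · exact havoid z hz hzx hzp
  have hlen := path_length_eq_dist htree _ hpath
  rw [Walk.length_append] at hlen
  have h1 : 1 ≤ r.length := by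
    rcases Nat.eq_zero_or_pos r.length with h0 | h
    · exact absurd (Walk.eq_of_length_eq_zero h0) hvx
    · exact h
  have hd := path_length_eq_dist htree p' hp'
  omega
lemma exists_nonleaf (htree : G.IsTree) (hcard : 3 ≤ Nat.card V) :
    ∃ v, 2 ≤ deg G v := by
  by_contra hno
  push_neg at hno
  have hne : Nonempty V := by
    have h0 : 0 < Nat.card V := by omega
    exact (Nat.card_pos_iff.mp h0).1
  obtain ⟨u⟩ := hne
  have hsub : (Set.univ : Set V) ⊆ insert u (G.neighborSet u) := by
    intro w _
    obtain ⟨p, hp, _⟩ := htree.isConnected.exists_path_of_dist u w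
    cases p with
    | nil => exact Set.mem_insert _ _
    | @cons _ v' _ h t =>
      by_cases hvw : v' = w
      · exact Set.mem_insert_of_mem _ (hvw ▸ h)
      · exfalso
        have hv'mem : v' ∈ (Walk.cons h t).support := by
          simp [t.start_mem_support]
        have hv'u : v' ≠ u := by
          rintro rfl
          exact ((Walk.cons_isPath_iff h t).mp hp).2 t.start_mem_support
        obtain ⟨n₁, n₂, hne', h1, h2, _, _⟩ :=
          internal_two_nbrs (Walk.cons h t) hp hv'mem hv'u hvw
        exact absurd (two_le_deg hne' h1 h2) (by have := hno v'; omega)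
  have hle : (Set.univ : Set V).ncard ≤ (insert u (G.neighborSet u)).ncard :=
    Set.ncard_le_ncard hsub (Set.toFinite _)
  rw [Set.ncard_univ] at hle
  have hins := Set.ncard_insert_le u (G.neighborSet u)
  have := hno u
  rw [deg] at this
  omega

end Helpers

/-- Let `T` be a tree with at least three vertices, maximum degree at most 4, and
no vertex of degree 2. If `T` has no splitter, then `T` is a 4-caterpillar, i.e.,
its non-leaf vertices form the vertex set of a path (each having degree 3 or 4). -/
theorem stmt3 {V : Type*} [Fintype V] (G : SimpleGraph V)
    (htree : G.IsTree) (hcard : 3 ≤ Nat.card V)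
    (hdeg : ∀ v, deg G v ≤ 4) (hno2 : ∀ v, deg G v ≠ 2)
    (hsplit : ∀ v, ¬ IsSplitter G v) :
    IsKCaterpillar 4 G := by
  classical
  obtain ⟨v₀, hv₀⟩ := exists_nonleaf htree hcard
  have hSfin : ({v | 2 ≤ deg G v} : Set V).Finite := Set.toFinite _
  set s : Finset (V × V) := hSfin.toFinset ×ˢ hSfin.toFinset with hs
  have hsne : s.Nonempty :=
    ⟨(v₀, v₀), by simp [hs, Finset.mem_product, Set.Finite.mem_toFinset, hv₀]⟩
  obtain ⟨⟨a, b⟩, habs, hmax⟩ := s.exists_max_image (fun q => G.dist q.1 q.2) hsne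
  rw [hs, Finset.mem_product, Set.Finite.mem_toFinset, Set.Finite.mem_toFinset] at habs
  obtain ⟨ha, hb⟩ := habs
  have hmax' : ∀ c d : V, 2 ≤ deg G c → 2 ≤ deg G d → G.dist c d ≤ G.dist a b := by
    intro c d hc hd
    exact hmax (c, d) (by simp [hs, Finset.mem_product, Set.Finite.mem_toFinset, hc, hd])
  obtain ⟨p, hp, hlen⟩ := htree.isConnected.exists_path_of_dist a b
  refine ⟨htree, hcard, ⟨a, b, p, hp, ?_⟩,
    fun v h2 => ⟨by have := hno2 v; omega, hdeg v⟩⟩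
  intro v
  constructor
  · intro h2
    by_contra hvp
    obtain ⟨q, hq, _⟩ := htree.isConnected.exists_path_of_dist v a
    have haq : a ∈ ({z | z ∈ p.support} : Set V) := p.start_mem_support
    obtain ⟨x, hxP, r, hr, hrsub, havoid⟩ := first_hit q {z | z ∈ p.support} hq haq
    have hxp : x ∈ p.support := hxP
    have hrdeg : ∀ y ∈ r.support, 2 ≤ deg G y :=
      fun y hy => support_two_le_deg q hq (hrsub y hy) h2 ha
    have hvx : v ≠ x := fun h => hvp (h ▸ hxp)
    by_cases hxa : x = a
    · subst hxa
      have hd := append_dist htree r p hr hp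
        (fun y hy hyx => havoid y hy hyx) hvx
      have := hmax' v b h2 hb
      omega
    by_cases hxb : x = b
    · subst hxb
      have havoid' : ∀ y ∈ r.support, y ≠ x → y ∉ p.reverse.support := by
        intro y hy hyb hc
        rw [Walk.support_reverse, List.mem_reverse] at hc
        exact havoid y hy hyb hc
      have hd := append_dist htree r p.reverse hr hp.reverse havoid' hvx
      have h5 := hmax' v a h2 ha
      rw [SimpleGraph.dist_comm] at hd
      omega
    · obtain ⟨n₁, n₂, hnne, hn1, hn2, hn1p, hn2p⟩ := internal_two_nbrs p hp hxp hxa hxb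
      obtain ⟨y, hyadj, hymem, hyx⟩ := exists_penult r hr hvx
      have hyP : y ∉ p.support := havoid y hymem hyx
      have hydeg : 2 ≤ deg G y := hrdeg y hymem
      have hn1deg : 2 ≤ deg G n₁ := support_two_le_deg p hp hn1p ha hb
      have hn2deg : 2 ≤ deg G n₂ := support_two_le_deg p hp hn2p ha hb
      refine hsplit x ?_
      have h3 : 2 < ({u | G.Adj x u ∧ 2 ≤ deg G u} : Set V).ncard := by
        rw [Set.two_lt_ncard (Set.toFinite _)]
        exact ⟨n₁, ⟨hn1, hn1deg⟩, n₂, ⟨hn2, hn2deg⟩, y, ⟨hyadj, hydeg⟩,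
          hnne, fun h => hyP (h ▸ hn1p), fun h => hyP (h ▸ hn2p)⟩
      exact h3
  · intro hvp
    exact support_two_le_deg p hp hvp ha hb


end TurnRegular
end

section
/- Every 4-caterpillar admits a convex rectilinear planar drawing. -/
open SimpleGraph

namespace TurnRegular

section Aux
variable {V : Type*} {G : SimpleGraph V}

variable {V : Type*} {G : SimpleGraph V}

lemma aux_getVert_injOn {a b : V} (p : G.Walk a b) (hp : p.IsPath) :
    ∀ i ≤ p.length, ∀ j ≤ p.length, p.getVert i = p.getVert j → i = j := by
  induction p with
  | nil => intro i hi j hj _; simp at hi hj; omega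
  | cons h q ih =>
    rename_i u v w
    rw [SimpleGraph.Walk.cons_isPath_iff] at hp
    intro i hi j hj hij
    match i, j with
    | 0, 0 => rfl
    | 0, (j+1) =>
      exfalso
      rw [SimpleGraph.Walk.getVert_zero, SimpleGraph.Walk.getVert_cons_succ] at hij
      exact hp.2 (SimpleGraph.Walk.mem_support_iff_exists_getVert.mpr ⟨j, hij.symm, by
        simpa using Nat.succ_le_succ_iff.mp hj⟩)
    | (i+1), 0 =>
      exfalso
      rw [SimpleGraph.Walk.getVert_zero, SimpleGraph.Walk.getVert_cons_succ] at hij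
      exact hp.2 (SimpleGraph.Walk.mem_support_iff_exists_getVert.mpr ⟨i, hij, by
        simpa using Nat.succ_le_succ_iff.mp hi⟩)
    | (i+1), (j+1) =>
      rw [SimpleGraph.Walk.getVert_cons_succ, SimpleGraph.Walk.getVert_cons_succ] at hij
      have := ih hp.1 i (by simpa using Nat.succ_le_succ_iff.mp hi) j
        (by simpa using Nat.succ_le_succ_iff.mp hj) hij
      omega

lemma aux_edge_getVert {a b u v : V} (p : G.Walk a b) (h : s(u,v) ∈ p.edges) :
    ∃ i < p.length, (p.getVert i = u ∧ p.getVert (i+1) = v) ∨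
      (p.getVert i = v ∧ p.getVert (i+1) = u) := by
  induction p with
  | nil => simp at h
  | cons hadj q ih =>
    rename_i x y w
    rw [SimpleGraph.Walk.edges_cons, List.mem_cons] at h
    rcases h with h | h
    · refine ⟨0, by simp [SimpleGraph.Walk.length_cons], ?_⟩
      rw [Sym2.eq_iff] at h
      rcases h with ⟨h1, h2⟩ | ⟨h1, h2⟩
      · exact Or.inl ⟨by simp [h1.symm], by simp [SimpleGraph.Walk.getVert_cons_succ, h2.symm]⟩
      · exact Or.inr ⟨by simp [h2.symm], by simp [SimpleGraph.Walk.getVert_cons_succ, h1.symm]⟩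
    · obtain ⟨i, hi, hcase⟩ := ih h
      exact ⟨i+1, by simp [SimpleGraph.Walk.length_cons]; omega,
        by simpa [SimpleGraph.Walk.getVert_cons_succ] using hcase⟩

lemma aux_tree_edge (ht : G.IsTree) {a b u v : V} (p : G.Walk a b) (hp : p.IsPath)
    (huv : G.Adj u v) (hu : u ∈ p.support) (hv : v ∈ p.support) : s(u,v) ∈ p.edges := by
  classical
  induction p with
  | nil =>
    rw [SimpleGraph.Walk.mem_support_nil_iff] at hu hv
    exact absurd (hu ▸ hv ▸ huv) G.irrefl
  | cons hadj q ih =>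
    rename_i x y w
    rw [SimpleGraph.Walk.cons_isPath_iff] at hp
    rw [SimpleGraph.Walk.support_cons, List.mem_cons] at hu hv
    by_cases hux : u = x
    · subst hux
      have hvne : v ≠ u := (G.ne_of_adj huv).symm
      rcases hv with rfl | hv
      · exact absurd huv G.irrefl
      · -- v in q.support; show v = y
        by_cases hvy : v = y
        · subst hvy
          simp [SimpleGraph.Walk.edges_cons]
        · exfalso
          set q' := q.takeUntil v hv with hq'
          have hq'path : q'.IsPath := hp.1.takeUntil hv
          have hP2 : (SimpleGraph.Walk.cons hadj q').IsPath := by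
            rw [SimpleGraph.Walk.cons_isPath_iff]
            exact ⟨hq'path, fun hmem => hp.2 (SimpleGraph.Walk.support_takeUntil_subset _ _ hmem)⟩
          have hP1 : (SimpleGraph.Walk.cons huv SimpleGraph.Walk.nil).IsPath := by
            rw [SimpleGraph.Walk.cons_isPath_iff]
            refine ⟨SimpleGraph.Walk.IsPath.nil, ?_⟩
            simp
            exact fun hh => hvne hh.symm
          obtain ⟨P, hP, hPuniq⟩ := ht.existsUnique_path u v
          have h1 := hPuniq _ hP1
          have h2 := hPuniq _ hP2
          have := h1.trans h2.symm
          have hlen := congrArg SimpleGraph.Walk.length this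
          simp [SimpleGraph.Walk.length_cons] at hlen
          exact hvy hlen.eq.symm
    · by_cases hvx : v = x
      · subst hvx
        have hune : u ≠ v := G.ne_of_adj huv
        rcases hu with rfl | hu
        · exact absurd huv G.irrefl
        · by_cases huy : u = y
          · subst huy
            rw [Sym2.eq_swap]
            simp [SimpleGraph.Walk.edges_cons]
          · exfalso
            set q' := q.takeUntil u hu with hq'
            have hq'path : q'.IsPath := hp.1.takeUntil hu
            have hP2 : (SimpleGraph.Walk.cons hadj q').IsPath := by
              rw [SimpleGraph.Walk.cons_isPath_iff]
              exact ⟨hq'path, fun hmem => hp.2 (SimpleGraph.Walk.support_takeUntil_subset _ _ hmem)⟩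
            have hP1 : (SimpleGraph.Walk.cons huv.symm SimpleGraph.Walk.nil).IsPath := by
              rw [SimpleGraph.Walk.cons_isPath_iff]
              refine ⟨SimpleGraph.Walk.IsPath.nil, ?_⟩
              simp
              exact fun hh => hune hh.symm
            obtain ⟨P, hP, hPuniq⟩ := ht.existsUnique_path v u
            have h1 := hPuniq _ hP1
            have h2 := hPuniq _ hP2
            have := h1.trans h2.symm
            have hlen := congrArg SimpleGraph.Walk.length this
            simp [SimpleGraph.Walk.length_cons] at hlen
            exact huy hlen.eq.symm
      · rcases hu with rfl | hu
        · exact absurd rfl hux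
        rcases hv with rfl | hv
        · exact absurd rfl hvx
        rw [SimpleGraph.Walk.edges_cons, List.mem_cons]
        exact Or.inr (ih hp.1 hu hv)

end Aux


lemma seg_sub_ray (a b : ℝ × ℝ) : segment ℝ a b ⊆ ray a b := by
  rw [segment_eq_image']
  rintro x ⟨t, ht, rfl⟩
  exact ⟨t, ht.1, rfl⟩

lemma mem_ray_coord {a b q : ℝ × ℝ} (h : q ∈ ray a b) :
    ∃ t : ℝ, 0 ≤ t ∧ q.1 = a.1 + t * (b.1 - a.1) ∧ q.2 = a.2 + t * (b.2 - a.2) := by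
  obtain ⟨t, ht, rfl⟩ := h
  exact ⟨t, ht, rfl, rfl⟩

lemma mem_seg_coord {a b q : ℝ × ℝ} (h : q ∈ segment ℝ a b) :
    ∃ t : ℝ, 0 ≤ t ∧ t ≤ 1 ∧ q.1 = a.1 + t * (b.1 - a.1) ∧ q.2 = a.2 + t * (b.2 - a.2) := by
  rw [segment_eq_image'] at h
  obtain ⟨t, ht, rfl⟩ := h
  exact ⟨t, ht.1, ht.2, rfl, rfl⟩

lemma seg_sub_box {x1 x2 y1 y2 : ℝ} (hx : x1 ≤ x2) :
    segment ℝ (x1, y1) (x2, y2) ⊆ Set.Icc x1 x2 ×ˢ Set.uIcc y1 y2 := by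
  intro q hq
  obtain ⟨t, ht0, ht1, h1, h2⟩ := mem_seg_coord hq
  constructor
  · simp only [Set.mem_Icc]
    constructor
    · nlinarith
    · nlinarith
  · rcases le_total y1 y2 with h | h
    · rw [Set.uIcc_of_le h]; simp only [Set.mem_Icc]; constructor <;> nlinarith
    · rw [Set.uIcc_of_ge h]; simp only [Set.mem_Icc]; constructor <;> nlinarith

lemma ray_vert_up {x y1 y2 : ℝ} (h : y1 ≤ y2) :
    ray (x, y1) (x, y2) ⊆ {x} ×ˢ Set.Ici y1 := by
  intro q hq
  obtain ⟨t, ht, h1, h2⟩ := mem_ray_coord hq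
  refine ⟨by simpa using h1, by simp; nlinarith⟩

lemma ray_vert_down {x y1 y2 : ℝ} (h : y2 ≤ y1) :
    ray (x, y1) (x, y2) ⊆ {x} ×ˢ Set.Iic y1 := by
  intro q hq
  obtain ⟨t, ht, h1, h2⟩ := mem_ray_coord hq
  refine ⟨by simpa using h1, by simp; nlinarith⟩

lemma ray_horiz_left {x1 x2 y : ℝ} (h : x2 ≤ x1) :
    ray (x1, y) (x2, y) ⊆ Set.Iic x1 ×ˢ {y} := by
  intro q hq
  obtain ⟨t, ht, h1, h2⟩ := mem_ray_coord hq
  refine ⟨by simp; nlinarith, by simpa using h2⟩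

lemma ray_horiz_right {x1 x2 y : ℝ} (h : x1 ≤ x2) :
    ray (x1, y) (x2, y) ⊆ Set.Ici x1 ×ˢ {y} := by
  intro q hq
  obtain ⟨t, ht, h1, h2⟩ := mem_ray_coord hq
  refine ⟨by simp; nlinarith, by simpa using h2⟩


noncomputable def rkF {V : Type*} (G : SimpleGraph V) (S : Set V) (nb : V → V)
    (f : V → ℕ) (u : V) : ℕ :=
  ({w | G.Adj (nb u) w ∧ w ∉ S} ∩ {w | f w < f u}).ncard

lemma rkF_lt {V : Type*} [Fintype V] (G : SimpleGraph V) (S : Set V) (nb : V → V)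
    (f : V → ℕ) (u : V) (hu : G.Adj (nb u) u) (hu2 : u ∉ S) :
    rkF G S nb f u < {w | G.Adj (nb u) w ∧ w ∉ S}.ncard := by
  apply Set.ncard_lt_ncard _ (Set.toFinite _)
  rw [Set.ssubset_iff_of_subset Set.inter_subset_left]
  refine ⟨u, ⟨hu, hu2⟩, fun hA => ?_⟩
  have : f u < f u := hA.2
  omega

lemma rkF_inj {V : Type*} [Fintype V] (G : SimpleGraph V) (S : Set V) (nb : V → V)
    (f : V → ℕ) (hf : Function.Injective f) (u u' : V)
    (hu : G.Adj (nb u) u) (hu2 : u ∉ S) (hu' : G.Adj (nb u') u') (hu2' : u' ∉ S)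
    (hnb : nb u = nb u') (h : rkF G S nb f u = rkF G S nb f u') : u = u' := by
  rcases lt_trichotomy (f u) (f u') with hlt | heq | hlt
  · exfalso
    have hsub : ({w | G.Adj (nb u) w ∧ w ∉ S} ∩ {w | f w < f u}) ⊆
        ({w | G.Adj (nb u') w ∧ w ∉ S} ∩ {w | f w < f u'}) := by
      rintro w ⟨⟨hw1, hw1b⟩, hw2⟩
      exact ⟨⟨by rwa [← hnb], hw1b⟩, lt_trans hw2 hlt⟩
    have hss : ({w | G.Adj (nb u) w ∧ w ∉ S} ∩ {w | f w < f u}) ⊂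
        ({w | G.Adj (nb u') w ∧ w ∉ S} ∩ {w | f w < f u'}) := by
      rw [Set.ssubset_iff_of_subset hsub]
      refine ⟨u, ⟨⟨by rwa [← hnb], hu2⟩, hlt⟩, fun hA => ?_⟩
      have : f u < f u := hA.2
      omega
    have := Set.ncard_lt_ncard hss (Set.toFinite _)
    rw [rkF, rkF] at h
    omega
  · exact hf heq
  · exfalso
    have hsub : ({w | G.Adj (nb u') w ∧ w ∉ S} ∩ {w | f w < f u'}) ⊆
        ({w | G.Adj (nb u) w ∧ w ∉ S} ∩ {w | f w < f u}) := by
      rintro w ⟨⟨hw1, hw1b⟩, hw2⟩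
      exact ⟨⟨by rwa [hnb], hw1b⟩, lt_trans hw2 hlt⟩
    have hss : ({w | G.Adj (nb u') w ∧ w ∉ S} ∩ {w | f w < f u'}) ⊂
        ({w | G.Adj (nb u) w ∧ w ∉ S} ∩ {w | f w < f u}) := by
      rw [Set.ssubset_iff_of_subset hsub]
      refine ⟨u', ⟨⟨by rwa [hnb], hu2'⟩, hlt⟩, fun hA => ?_⟩
      have : f u' < f u' := hA.2
      omega
    have := Set.ncard_lt_ncard hss (Set.toFinite _)
    rw [rkF, rkF] at h
    omega

def dirm (n i r : ℕ) : ℕ :=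
  if i = 0 then r else if i = n then (if r ≤ 1 then r else 3) else r

lemma dirm_inj {n i r r' : ℕ} (hr : i ≠ 0 → r ≤ 2) (hr' : i ≠ 0 → r' ≤ 2)
    (h : dirm n i r = dirm n i r') : r = r' := by
  unfold dirm at h
  split_ifs at h with h0 h1 h2 h3 h4 h5 <;> first
    | omega
    | (exact absurd h (by have := hr h0; have := hr' h0; omega))
    | (have := hr h0; have := hr' h0; omega)

noncomputable def dpos (i d : ℕ) : ℝ × ℝ :=
  if d = 0 then ((i : ℝ), 1) else if d = 1 then ((i : ℝ), -1)
  else if d = 2 then ((i : ℝ) - 1, 0) else ((i : ℝ) + 1, 0)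

lemma dpos_0 (i : ℕ) : dpos i 0 = ((i:ℝ), 1) := rfl
lemma dpos_1 (i : ℕ) : dpos i 1 = ((i:ℝ), -1) := rfl
lemma dpos_2 (i : ℕ) : dpos i 2 = ((i:ℝ) - 1, 0) := rfl
lemma dpos_3 (i : ℕ) : dpos i 3 = ((i:ℝ) + 1, 0) := rfl

noncomputable def gam {V : Type*} (S : Set V) (idx : V → ℕ) (nb : V → V) (dc : V → ℕ)
    [∀ v, Decidable (v ∈ S)] (v : V) : ℝ × ℝ :=
  if v ∈ S then ((idx v : ℝ), 0) else dpos (idx (nb v)) (dc v)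


def shapeSet (n : ℕ) : Fin 5 → ℕ → Set (ℝ × ℝ)
  | 0, i => Set.Icc (i : ℝ) ((i : ℝ) + 1) ×ˢ {0}
  | 1, i => {(i : ℝ)} ×ˢ Set.Ici 0
  | 2, i => {(i : ℝ)} ×ˢ Set.Iic 0
  | 3, _ => Set.Iic 0 ×ˢ {(0 : ℝ)}
  | 4, _ => Set.Ici (n : ℝ) ×ˢ {(0 : ℝ)}

def Desc {V : Type*} (n : ℕ) (g : ℕ → V) (Lf : V → ℕ → Prop) (dc : V → ℕ)
    (u v : V) (c : Fin 5) (i : ℕ) : Prop :=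
  (c = 0 ∧ i < n ∧ ((u = g i ∧ v = g (i + 1)) ∨ (v = g i ∧ u = g (i + 1)))) ∨
  (c ≠ 0 ∧ (c = 3 → i = 0) ∧ (c = 4 → i = n) ∧
    ∃ ℓ, Lf ℓ i ∧ dc ℓ + 1 = (c : ℕ) ∧ ((u = g i ∧ v = ℓ) ∨ (v = g i ∧ u = ℓ)))

lemma desc_sym2 {V : Type*} {n : ℕ} {g : ℕ → V} {Lf : V → ℕ → Prop} {dc : V → ℕ}
    {u v : V} {c : Fin 5} {i : ℕ} (h : Desc n g Lf dc u v c i) :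
    (c = 0 ∧ s(u, v) = s(g i, g (i + 1))) ∨
    (∃ ℓ, Lf ℓ i ∧ dc ℓ + 1 = (c : ℕ) ∧ s(u, v) = s(g i, ℓ)) := by
  rcases h with ⟨hc, _, h⟩ | ⟨_, _, _, ℓ, hℓ, hdc, h⟩
  · refine Or.inl ⟨hc, ?_⟩
    rcases h with ⟨rfl, rfl⟩ | ⟨rfl, rfl⟩
    · rfl
    · exact Sym2.eq_swap
  · refine Or.inr ⟨ℓ, hℓ, hdc, ?_⟩
    rcases h with ⟨rfl, rfl⟩ | ⟨rfl, rfl⟩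
    · rfl
    · exact Sym2.eq_swap

lemma desc_end1 {V : Type*} {n : ℕ} {g : ℕ → V} {Lf : V → ℕ → Prop} {dc : V → ℕ}
    {u v : V} {c : Fin 5} {i : ℕ} (h : Desc n g Lf dc u v c i) :
    g i = u ∨ g i = v := by
  rcases h with ⟨_, _, h⟩ | ⟨_, _, _, ℓ, _, _, h⟩ <;>
    rcases h with ⟨h1, _⟩ | ⟨h1, _⟩
  · exact Or.inl h1.symm
  · exact Or.inr h1.symm
  · exact Or.inl h1.symm
  · exact Or.inr h1.symm

lemma desc_end2 {V : Type*} {n : ℕ} {g : ℕ → V} {Lf : V → ℕ → Prop} {dc : V → ℕ}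
    {u v : V} {i : ℕ} (h : Desc n g Lf dc u v 0 i) :
    g (i + 1) = u ∨ g (i + 1) = v := by
  rcases h with ⟨_, _, h⟩ | ⟨hc, _⟩
  · rcases h with ⟨_, h2⟩ | ⟨_, h2⟩
    · exact Or.inr h2.symm
    · exact Or.inl h2.symm
  · exact absurd rfl hc

lemma resolveLE {V : Type*} (n : ℕ) (g : ℕ → V) (Γ : V → ℝ × ℝ)
    (Lf : V → ℕ → Prop) (dc : V → ℕ)
    (hΓ : ∀ k, k ≤ n → Γ (g k) = ((k : ℝ), 0))
    (hLuniq : ∀ ℓ ℓ' i, Lf ℓ i → Lf ℓ' i → dc ℓ = dc ℓ' → ℓ = ℓ')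
    (u v x y : V) (hne : s(u, v) ≠ s(x, y))
    (c c' : Fin 5) (hcc : (c : ℕ) ≤ (c' : ℕ)) (i i' : ℕ) (hi : i ≤ n) (hi' : i' ≤ n)
    (hd1 : Desc n g Lf dc u v c i) (hd2 : Desc n g Lf dc x y c' i')
    (q : ℝ × ℝ) (hq : q ∈ shapeSet n c i) (hq' : q ∈ shapeSet n c' i') :
    ∃ w, (w = u ∨ w = v) ∧ (w = x ∨ w = y) ∧ q = Γ w := by
  have prodify : q = (q.1, q.2) := rfl
  fin_cases c <;> fin_cases c' <;> simp only [shapeSet] at hq hq' <;>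
    obtain ⟨hq1, hq2⟩ := hq <;> obtain ⟨hq1', hq2'⟩ := hq' <;>
    simp only [Set.mem_Icc, Set.mem_singleton_iff, Set.mem_Ici, Set.mem_Iic] at hq1 hq2 hq1' hq2' hcc ⊢
  any_goals omega
  -- (0,0)
  · have h1 := hd1; have h2 := hd2
    rcases desc_sym2 hd1 with ⟨_, hs1⟩ | ⟨ℓ0, _, hdc0, _⟩; swap
    · exfalso; simp at hdc0
    rcases desc_sym2 hd2 with ⟨_, hs2⟩ | ⟨ℓ0, _, hdc0, _⟩; swap
    · exfalso; simp at hdc0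
    have hii : i ≠ i' := by
      rintro rfl
      exact hne (hs1.trans hs2.symm)
    rcases Nat.lt_or_ge i i' with hlt | hge
    · have h1' : (i' : ℝ) ≤ q.1 := hq1'.1
      have h2' : q.1 ≤ (i : ℝ) + 1 := hq1.2
      have : i' ≤ i + 1 := by exact_mod_cast h1'.trans h2'
      have hii1 : i' = i + 1 := by omega
      have hqq : q = Γ (g i') := by
        rw [hΓ i' hi', prodify]
        have : q.1 = (i' : ℝ) := le_antisymm (by rw [hii1]; push_cast; linarith) h1'
        rw [this, hq2]
      subst hii1
      exact ⟨g (i + 1), desc_end2 hd1, desc_end1 hd2, hqq⟩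
    · have hlt : i' < i := by omega
      have h1' : (i : ℝ) ≤ q.1 := hq1.1
      have h2' : q.1 ≤ (i' : ℝ) + 1 := hq1'.2
      have : i ≤ i' + 1 := by exact_mod_cast h1'.trans h2'
      have hii1 : i = i' + 1 := by omega
      have hqq : q = Γ (g i) := by
        rw [hΓ i hi, prodify]
        have : q.1 = (i : ℝ) := le_antisymm (by rw [hii1]; push_cast; linarith) h1'
        rw [this, hq2]
      subst hii1
      exact ⟨g (i' + 1), desc_end1 hd1, desc_end2 hd2, hqq⟩
  -- (0,1)
  · have hnii : i' = i ∨ i' = i + 1 := by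
      have h1 : (i : ℝ) ≤ (i' : ℝ) := hq1' ▸ hq1.1
      have h2 : (i' : ℝ) ≤ (i : ℝ) + 1 := hq1' ▸ hq1.2
      have h1' : i ≤ i' := by exact_mod_cast h1
      have h2' : i' ≤ i + 1 := by exact_mod_cast h2
      omega
    have hqq : q = Γ (g i') := by
      rw [hΓ i' hi', prodify, hq1', hq2]
    rcases hnii with rfl | rfl
    · exact ⟨g i', desc_end1 hd1, desc_end1 hd2, hqq⟩
    · exact ⟨g (i + 1), desc_end2 hd1, desc_end1 hd2, hqq⟩
  -- (0,2)
  · have hnii : i' = i ∨ i' = i + 1 := by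
      have h1 : (i : ℝ) ≤ (i' : ℝ) := hq1' ▸ hq1.1
      have h2 : (i' : ℝ) ≤ (i : ℝ) + 1 := hq1' ▸ hq1.2
      have h1' : i ≤ i' := by exact_mod_cast h1
      have h2' : i' ≤ i + 1 := by exact_mod_cast h2
      omega
    have hqq : q = Γ (g i') := by
      rw [hΓ i' hi', prodify, hq1', hq2]
    rcases hnii with rfl | rfl
    · exact ⟨g i', desc_end1 hd1, desc_end1 hd2, hqq⟩
    · exact ⟨g (i + 1), desc_end2 hd1, desc_end1 hd2, hqq⟩
  -- (0,3)
  · have hi0 : i = 0 := by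
      have h1 : (i : ℝ) ≤ 0 := le_trans hq1.1 hq1'
      have : i ≤ 0 := by exact_mod_cast h1
      omega
    have hi'0 : i' = 0 := by
      rcases hd2 with ⟨hc, _⟩ | ⟨_, h3, _⟩
      · exact absurd hc (by decide)
      · exact h3 (by decide)
    subst hi0; subst hi'0
    have hq10 : q.1 = 0 := le_antisymm hq1' (by exact_mod_cast hq1.1)
    have hqq : q = Γ (g 0) := by
      rw [hΓ 0 (Nat.zero_le n), prodify, hq10, hq2]
      norm_num
    exact ⟨g 0, desc_end1 hd1, desc_end1 hd2, hqq⟩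
  -- (0,4)
  · have hin : i + 1 = n := by
      have hn1 : (n : ℝ) ≤ q.1 := hq1'
      have h2 : q.1 ≤ (i : ℝ) + 1 := hq1.2
      have : n ≤ i + 1 := by exact_mod_cast hn1.trans h2
      have hilt : i < n := by
        rcases hd1 with ⟨_, hlt, _⟩ | ⟨hc, _⟩
        · exact hlt
        · exact absurd rfl hc
      omega
    have hi'n : i' = n := by
      rcases hd2 with ⟨hc, _⟩ | ⟨_, _, h4, _⟩
      · exact absurd hc (by decide)
      · exact h4 (by decide)
    have hq1n : q.1 = (n : ℝ) := by
      refine le_antisymm ?_ hq1'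
      calc q.1 ≤ (i : ℝ) + 1 := hq1.2
      _ = (n : ℝ) := by exact_mod_cast congrArg (Nat.cast (R := ℝ)) hin
    have hqq : q = Γ (g n) := by
      rw [hΓ n le_rfl, prodify, hq1n, hq2]
    refine ⟨g n, ?_, hi'n ▸ desc_end1 hd2, hqq⟩
    · have := desc_end2 hd1
      rwa [hin] at this
  -- (1,1)
  · exfalso
    have hii : i = i' := by
      have : (i : ℝ) = (i' : ℝ) := hq1.symm.trans hq1'
      exact_mod_cast this
    subst hii
    rcases desc_sym2 hd1 with ⟨hc, _⟩ | ⟨ℓ, hℓ, hdc, hs⟩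
    · exact absurd hc (by decide)
    rcases desc_sym2 hd2 with ⟨hc, _⟩ | ⟨ℓ', hℓ', hdc', hs'⟩
    · exact absurd hc (by decide)
    have hdd := hdc.trans hdc'.symm
    have : ℓ = ℓ' := hLuniq ℓ ℓ' i hℓ hℓ' (by omega)
    subst this
    exact hne (hs.trans hs'.symm)
  -- (1,2)
  · have hii : i = i' := by
      have : (i : ℝ) = (i' : ℝ) := hq1.symm.trans hq1'
      exact_mod_cast this
    subst hii
    have hq20 : q.2 = 0 := le_antisymm hq2' hq2
    have hqq : q = Γ (g i) := by rw [hΓ i hi, prodify, hq1, hq20]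
    exact ⟨g i, desc_end1 hd1, desc_end1 hd2, hqq⟩
  -- (1,3)
  · have hi0 : i = 0 := by
      have : (i : ℝ) ≤ 0 := hq1 ▸ hq1'
      have : i ≤ 0 := by exact_mod_cast this
      omega
    have hi'0 : i' = 0 := by
      rcases hd2 with ⟨hc, _⟩ | ⟨_, h3, _⟩
      · exact absurd hc (by decide)
      · exact h3 (by decide)
    subst hi0
    have hqq : q = Γ (g 0) := by
      rw [hΓ 0 (Nat.zero_le n), prodify, hq1, hq2']
      try norm_num
    exact ⟨g 0, desc_end1 hd1, hi'0 ▸ desc_end1 hd2, hqq⟩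
  -- (1,4)
  · have hin : i = n := by
      have : (n : ℝ) ≤ (i : ℝ) := hq1 ▸ hq1'
      have : n ≤ i := by exact_mod_cast this
      omega
    have hi'n : i' = n := by
      rcases hd2 with ⟨hc, _⟩ | ⟨_, _, h4, _⟩
      · exact absurd hc (by decide)
      · exact h4 (by decide)
    have hqq : q = Γ (g n) := by
      rw [hΓ n le_rfl, prodify, hq2', hq1, hin]
    exact ⟨g n, hin ▸ desc_end1 hd1, hi'n ▸ desc_end1 hd2, hqq⟩
  -- (2,2)
  · exfalso
    have hii : i = i' := by
      have : (i : ℝ) = (i' : ℝ) := hq1.symm.trans hq1'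
      exact_mod_cast this
    subst hii
    rcases desc_sym2 hd1 with ⟨hc, _⟩ | ⟨ℓ, hℓ, hdc, hs⟩
    · exact absurd hc (by decide)
    rcases desc_sym2 hd2 with ⟨hc, _⟩ | ⟨ℓ', hℓ', hdc', hs'⟩
    · exact absurd hc (by decide)
    have hdd := hdc.trans hdc'.symm
    have : ℓ = ℓ' := hLuniq ℓ ℓ' i hℓ hℓ' (by omega)
    subst this
    exact hne (hs.trans hs'.symm)
  -- (2,3)
  · have hi0 : i = 0 := by
      have : (i : ℝ) ≤ 0 := hq1 ▸ hq1'
      have : i ≤ 0 := by exact_mod_cast this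
      omega
    have hi'0 : i' = 0 := by
      rcases hd2 with ⟨hc, _⟩ | ⟨_, h3, _⟩
      · exact absurd hc (by decide)
      · exact h3 (by decide)
    subst hi0
    have hqq : q = Γ (g 0) := by
      rw [hΓ 0 (Nat.zero_le n), prodify, hq1, hq2']
      try norm_num
    exact ⟨g 0, desc_end1 hd1, hi'0 ▸ desc_end1 hd2, hqq⟩
  -- (2,4)
  · have hin : i = n := by
      have : (n : ℝ) ≤ (i : ℝ) := hq1 ▸ hq1'
      have : n ≤ i := by exact_mod_cast this
      omega
    have hi'n : i' = n := by
      rcases hd2 with ⟨hc, _⟩ | ⟨_, _, h4, _⟩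
      · exact absurd hc (by decide)
      · exact h4 (by decide)
    have hqq : q = Γ (g n) := by
      rw [hΓ n le_rfl, prodify, hq2', hq1, hin]
    exact ⟨g n, hin ▸ desc_end1 hd1, hi'n ▸ desc_end1 hd2, hqq⟩
  -- (3,3)
  · exfalso
    have hi0 : i = 0 := by
      rcases hd1 with ⟨hc, _⟩ | ⟨_, h3, _⟩
      · exact absurd hc (by decide)
      · exact h3 (by decide)
    have hi'0 : i' = 0 := by
      rcases hd2 with ⟨hc, _⟩ | ⟨_, h3, _⟩
      · exact absurd hc (by decide)
      · exact h3 (by decide)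
    subst hi0
    rcases desc_sym2 hd1 with ⟨hc, _⟩ | ⟨ℓ, hℓ, hdc, hs⟩
    · exact absurd hc (by decide)
    rcases desc_sym2 hd2 with ⟨hc, _⟩ | ⟨ℓ', hℓ', hdc', hs'⟩
    · exact absurd hc (by decide)
    rw [hi'0] at hℓ' hs'
    have hdd := hdc.trans hdc'.symm
    have : ℓ = ℓ' := hLuniq ℓ ℓ' 0 hℓ hℓ' (by omega)
    subst this
    exact hne (hs.trans hs'.symm)
  -- (3,4)
  · have hi0 : i = 0 := by
      rcases hd1 with ⟨hc, _⟩ | ⟨_, h3, _⟩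
      · exact absurd hc (by decide)
      · exact h3 (by decide)
    have hi'n : i' = n := by
      rcases hd2 with ⟨hc, _⟩ | ⟨_, _, h4, _⟩
      · exact absurd hc (by decide)
      · exact h4 (by decide)
    have hn0 : n = 0 := by
      have : (n : ℝ) ≤ 0 := le_trans hq1' hq1
      have : n ≤ 0 := by exact_mod_cast this
      omega
    have h00 : (0 : ℝ) ≤ q.1 := by
      rw [hn0] at hq1'
      exact_mod_cast hq1'
    have hq10 : q.1 = 0 := le_antisymm hq1 h00
    have hqq : q = Γ (g 0) := by
      rw [hΓ 0 (Nat.zero_le n), prodify, hq10, hq2]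
      norm_num
    refine ⟨g 0, hi0 ▸ desc_end1 hd1, ?_, hqq⟩
    · have := desc_end1 hd2
      rwa [hi'n, hn0] at this
  -- (4,4)
  · exfalso
    have hin : i = n := by
      rcases hd1 with ⟨hc, _⟩ | ⟨_, _, h4, _⟩
      · exact absurd hc (by decide)
      · exact h4 (by decide)
    have hi'n : i' = n := by
      rcases hd2 with ⟨hc, _⟩ | ⟨_, _, h4, _⟩
      · exact absurd hc (by decide)
      · exact h4 (by decide)
    rcases desc_sym2 hd1 with ⟨hc, _⟩ | ⟨ℓ, hℓ, hdc, hs⟩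
    · exact absurd hc (by decide)
    rcases desc_sym2 hd2 with ⟨hc, _⟩ | ⟨ℓ', hℓ', hdc', hs'⟩
    · exact absurd hc (by decide)
    rw [hin] at hℓ hs
    rw [hi'n] at hℓ' hs'
    have hdd := hdc.trans hdc'.symm
    have : ℓ = ℓ' := hLuniq ℓ ℓ' n hℓ hℓ' (by omega)
    subst this
    exact hne (hs.trans hs'.symm)

lemma resolve {V : Type*} (n : ℕ) (g : ℕ → V) (Γ : V → ℝ × ℝ)
    (Lf : V → ℕ → Prop) (dc : V → ℕ)
    (hΓ : ∀ k, k ≤ n → Γ (g k) = ((k : ℝ), 0))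
    (hLuniq : ∀ ℓ ℓ' i, Lf ℓ i → Lf ℓ' i → dc ℓ = dc ℓ' → ℓ = ℓ')
    (u v x y : V) (hne : s(u, v) ≠ s(x, y))
    (c c' : Fin 5) (i i' : ℕ) (hi : i ≤ n) (hi' : i' ≤ n)
    (hd1 : Desc n g Lf dc u v c i) (hd2 : Desc n g Lf dc x y c' i')
    (q : ℝ × ℝ) (hq : q ∈ shapeSet n c i) (hq' : q ∈ shapeSet n c' i') :
    ∃ w, (w = u ∨ w = v) ∧ (w = x ∨ w = y) ∧ q = Γ w := by
  rcases le_total (c : ℕ) (c' : ℕ) with hcc | hcc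
  · exact resolveLE n g Γ Lf dc hΓ hLuniq u v x y hne c c' hcc i i' hi hi' hd1 hd2 q hq hq'
  · obtain ⟨w, h1, h2, h3⟩ :=
      resolveLE n g Γ Lf dc hΓ hLuniq x y u v (fun h => hne h.symm) c' c hcc i' i hi' hi
        hd2 hd1 q hq' hq
    exact ⟨w, h2, h1, h3⟩



lemma edgeDrawn_comm {V : Type*} (G : SimpleGraph V) (Γ : V → ℝ × ℝ) (a b : V) :
    edgeDrawn G Γ a b = edgeDrawn G Γ b a := by
  unfold edgeDrawn
  rw [Set.union_comm]
  congr 1 <;> split_ifs <;> first | rfl | rw [segment_symm]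

lemma seg_sub_edgeDrawn {V : Type*} (G : SimpleGraph V) (Γ : V → ℝ × ℝ) (a b : V) :
    segment ℝ (Γ a) (Γ b) ⊆ edgeDrawn G Γ a b := by
  unfold edgeDrawn
  intro q hq
  left
  split_ifs
  · exact seg_sub_ray _ _ hq
  · exact hq

lemma edgeDrawn_sub_seg {V : Type*} (G : SimpleGraph V) (Γ : V → ℝ × ℝ) (a b : V)
    (ha : deg G a ≠ 1) (hb : deg G b ≠ 1) :
    edgeDrawn G Γ a b ⊆ segment ℝ (Γ a) (Γ b) := by
  unfold edgeDrawn
  rw [if_neg hb, if_neg ha, Set.union_self]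

lemma edgeDrawn_sub_ray {V : Type*} (G : SimpleGraph V) (Γ : V → ℝ × ℝ) (a b : V)
    (ha : deg G a ≠ 1) (hb : deg G b = 1) :
    edgeDrawn G Γ a b ⊆ ray (Γ a) (Γ b) := by
  unfold edgeDrawn
  rw [if_pos hb, if_neg ha]
  exact Set.union_subset subset_rfl (seg_sub_ray _ _)

lemma buildDrawing {V : Type*} [Fintype V] (G : SimpleGraph V) (n : ℕ) (g : ℕ → V) (S : Set V)
    (hginj : ∀ i ≤ n, ∀ j ≤ n, g i = g j → i = j)
    (hadjc : ∀ i, i < n → G.Adj (g i) (g (i + 1)))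
    (hmem : ∀ v, v ∈ S ↔ ∃ i, g i = v ∧ i ≤ n)
    (hSdeg : ∀ v ∈ S, 3 ≤ deg G v ∧ deg G v ≤ 4)
    (hleaf1 : ∀ v, v ∉ S → deg G v = 1)
    (hclass : ∀ u v, G.Adj u v → u ∈ S → v ∈ S →
      ∃ k, k < n ∧ ((g k = u ∧ g (k + 1) = v) ∨ (g k = v ∧ g (k + 1) = u)))
    (hleafnb : ∀ u w, G.Adj u w → u ∉ S → w ∈ S) :
    HasConvexDrawing G := by
  classical
  have hgS : ∀ i, i ≤ n → g i ∈ S := fun i hi => (hmem _).mpr ⟨i, rfl, hi⟩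
  have hdeg1' : ∀ v, v ∈ S → deg G v ≠ 1 := fun v hv => by have := (hSdeg v hv).1; omega
  have hnbex : ∀ u : V, ∃ w, u ∉ S → G.Adj u w ∧ w ∈ S := by
    intro u
    by_cases hu : u ∈ S
    · exact ⟨u, fun h => absurd hu h⟩
    · obtain ⟨x, hx⟩ := Set.ncard_eq_one.mp (hleaf1 u hu)
      have hxadj : G.Adj u x := by
        have : x ∈ G.neighborSet u := by rw [hx]; rfl
        exact this
      exact ⟨x, fun _ => ⟨hxadj, hleafnb u x hxadj hu⟩⟩
  choose nb hnb using hnbex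
  have hnbuniq : ∀ u, u ∉ S → ∀ w, G.Adj u w → w = nb u := by
    intro u hu w hw
    obtain ⟨x, hx⟩ := Set.ncard_eq_one.mp (hleaf1 u hu)
    have h1 : w ∈ G.neighborSet u := hw
    have h2 : nb u ∈ G.neighborSet u := (hnb u hu).1
    rw [hx, Set.mem_singleton_iff] at h1 h2
    rw [h1, h2]
  set idx : V → ℕ := fun v => sInf {i | g i = v} with hidxdef
  have hidxg : ∀ i, i ≤ n → idx (g i) = i := by
    intro i hi
    have hne : {j | g j = g i}.Nonempty := ⟨i, rfl⟩
    have h1 : g (idx (g i)) = g i := Nat.sInf_mem hne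
    have h2 : idx (g i) ≤ i := Nat.sInf_le rfl
    exact hginj _ (le_trans h2 hi) i hi h1
  have hgidx : ∀ v, v ∈ S → g (idx v) = v ∧ idx v ≤ n := by
    intro v hv
    obtain ⟨i, hgi, hi⟩ := (hmem v).mp hv
    subst hgi
    rw [hidxg i hi]
    exact ⟨rfl, hi⟩
  set f : V → ℕ := fun v => ((Fintype.equivFin V) v : ℕ) with hfdef
  have hfinj : Function.Injective f := by
    intro x y h
    exact (Fintype.equivFin V).injective (Fin.val_injective h)
  set rk : V → ℕ := fun u => rkF G S nb f u with hrkdef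
  set dc : V → ℕ := fun u => dirm n (idx (nb u)) (rk u) with hdcdef
  set Lf : V → ℕ → Prop := fun ℓ i => ℓ ∉ S ∧ nb ℓ = g i with hLfdef
  set Γ : V → ℝ × ℝ := gam S idx nb dc with hΓdef
  have hcnt : ∀ i, i ≤ n → {w | G.Adj (g i) w ∧ w ∉ S}.ncard
      + ((if 0 < i then 1 else 0) + (if i < n then 1 else 0)) = deg G (g i) := by
    intro i hi
    have hsplit : G.neighborSet (g i) =
        {w | G.Adj (g i) w ∧ w ∉ S} ∪ {w | G.Adj (g i) w ∧ w ∈ S} := by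
      ext w
      simp only [SimpleGraph.mem_neighborSet, Set.mem_union, Set.mem_setOf_eq]
      tauto
    have hdisj : Disjoint {w | G.Adj (g i) w ∧ w ∉ S} {w | G.Adj (g i) w ∧ w ∈ S} :=
      Set.disjoint_left.mpr (fun w hw1 hw2 => hw1.2 hw2.2)
    have hcard : deg G (g i) =
        {w | G.Adj (g i) w ∧ w ∉ S}.ncard + {w | G.Adj (g i) w ∧ w ∈ S}.ncard := by
      rw [deg, hsplit, Set.ncard_union_eq hdisj (Set.toFinite _) (Set.toFinite _)]
    suffices hS : {w | G.Adj (g i) w ∧ w ∈ S}.ncard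
        = (if 0 < i then 1 else 0) + (if i < n then 1 else 0) by omega
    rcases Nat.eq_zero_or_pos i with rfl | hipos
    · rcases Nat.eq_zero_or_pos n with hn0 | hnpos
      · have hemp : {w | G.Adj (g 0) w ∧ w ∈ S} = ∅ := by
          ext w
          simp only [Set.mem_setOf_eq, Set.mem_empty_iff_false, iff_false, not_and]
          intro hadj hwS
          obtain ⟨k, hk, _⟩ := hclass _ _ hadj (hgS 0 (Nat.zero_le n)) hwS
          omega
        rw [hemp]
        simp [hn0]
      · have hone : {w | G.Adj (g 0) w ∧ w ∈ S} = {g 1} := by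
          ext w
          simp only [Set.mem_setOf_eq, Set.mem_singleton_iff]
          constructor
          · rintro ⟨hadj, hwS⟩
            obtain ⟨k, hk, hcase⟩ := hclass _ _ hadj (hgS 0 (Nat.zero_le n)) hwS
            rcases hcase with ⟨hk1, hk2⟩ | ⟨hk1, hk2⟩
            · have hk0 : k = 0 := hginj k (by omega) 0 (by omega) hk1
              rw [← hk2, hk0]
            · exfalso
              have : k + 1 = 0 := hginj (k+1) (by omega) 0 (by omega) hk2
              omega
          · rintro rfl
            exact ⟨hadjc 0 hnpos, hgS 1 (by omega)⟩
        rw [hone, Set.ncard_singleton]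
        simp [hnpos]
    · rcases Nat.lt_or_ge i n with hilt | hige
      · have hpair : {w | G.Adj (g i) w ∧ w ∈ S} = {g (i-1), g (i+1)} := by
          ext w
          simp only [Set.mem_setOf_eq, Set.mem_insert_iff, Set.mem_singleton_iff]
          constructor
          · rintro ⟨hadj, hwS⟩
            obtain ⟨k, hk, hcase⟩ := hclass _ _ hadj (hgS i hi) hwS
            rcases hcase with ⟨hk1, hk2⟩ | ⟨hk1, hk2⟩
            · have hk0 : k = i := hginj k (by omega) i hi hk1
              right; rw [← hk2, hk0]
            · have hk0 : k + 1 = i := hginj (k+1) (by omega) i hi hk2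
              left; rw [← hk1]; congr 1; omega
          · rintro (rfl | rfl)
            · have h1 : G.Adj (g (i-1)) (g (i-1+1)) := hadjc (i-1) (by omega)
              have h2 : i - 1 + 1 = i := by omega
              rw [h2] at h1
              exact ⟨h1.symm, hgS (i-1) (by omega)⟩
            · exact ⟨hadjc i hilt, hgS (i+1) (by omega)⟩
        rw [hpair, Set.ncard_pair]
        · simp [hipos, hilt]
        · intro heq
          have := hginj (i-1) (by omega) (i+1) (by omega) heq
          omega
      · have hie : i = n := le_antisymm hi hige
        have hone : {w | G.Adj (g i) w ∧ w ∈ S} = {g (i-1)} := by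
          ext w
          simp only [Set.mem_setOf_eq, Set.mem_singleton_iff]
          constructor
          · rintro ⟨hadj, hwS⟩
            obtain ⟨k, hk, hcase⟩ := hclass _ _ hadj (hgS i hi) hwS
            rcases hcase with ⟨hk1, hk2⟩ | ⟨hk1, hk2⟩
            · exfalso
              have : k = i := hginj k (by omega) i hi hk1
              omega
            · have hk0 : k + 1 = i := hginj (k+1) (by omega) i hi hk2
              rw [← hk1]; congr 1; omega
          · rintro rfl
            have h1 : G.Adj (g (i-1)) (g (i-1+1)) := hadjc (i-1) (by omega)
            have h2 : i - 1 + 1 = i := by omega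
            rw [h2] at h1
            exact ⟨h1.symm, hgS (i-1) (by omega)⟩
        rw [hone, Set.ncard_singleton]
        have hnlt : ¬ i < n := by omega
        simp [hipos, hnlt]
  have hrkb : ∀ u, u ∉ S → rk u +
      ((if 0 < idx (nb u) then 1 else 0) + (if idx (nb u) < n then 1 else 0)) + 1 ≤ 4 := by
    intro u hu
    obtain ⟨hadj, hS'⟩ := hnb u hu
    obtain ⟨hg0, hle⟩ := hgidx (nb u) hS'
    have h1 : rk u < {w | G.Adj (nb u) w ∧ w ∉ S}.ncard := rkF_lt G S nb f u hadj.symm hu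
    have h2 := hcnt (idx (nb u)) hle
    rw [hg0] at h2
    have h3 := (hSdeg (nb u) hS').2
    omega
  have hdc3 : ∀ u, u ∉ S → dc u ≤ 3 ∧ (dc u = 2 → idx (nb u) = 0) ∧
      (dc u = 3 → idx (nb u) = n) ∧ (idx (nb u) ≠ 0 → rk u ≤ 2) := by
    intro u hu
    have hb := hrkb u hu
    have hle : idx (nb u) ≤ n := (hgidx (nb u) (hnb u hu).2).2
    simp only [hdcdef]
    unfold dirm
    split_ifs at hb ⊢ <;> omega
  have hLuniq : ∀ ℓ ℓ' i, Lf ℓ i → Lf ℓ' i → dc ℓ = dc ℓ' → ℓ = ℓ' := by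
    intro ℓ ℓ' i hL hL' hdceq
    simp only [hLfdef] at hL hL'
    obtain ⟨hℓS, hℓnb⟩ := hL
    obtain ⟨hℓ'S, hℓ'nb⟩ := hL'
    have hnbe : nb ℓ = nb ℓ' := by rw [hℓnb, hℓ'nb]
    have hrkeq : rk ℓ = rk ℓ' := by
      simp only [hdcdef] at hdceq
      rw [hnbe] at hdceq
      have hc1 : idx (nb ℓ') ≠ 0 → rk ℓ ≤ 2 := by
        rw [← hnbe]; exact (hdc3 ℓ hℓS).2.2.2
      have hc2 : idx (nb ℓ') ≠ 0 → rk ℓ' ≤ 2 := (hdc3 ℓ' hℓ'S).2.2.2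
      exact dirm_inj hc1 hc2 hdceq
    simp only [hrkdef] at hrkeq
    exact rkF_inj G S nb f hfinj ℓ ℓ' (hnb ℓ hℓS).1.symm hℓS (hnb ℓ' hℓ'S).1.symm hℓ'S hnbe hrkeq
  have hΓg : ∀ k, k ≤ n → Γ (g k) = ((k : ℝ), 0) := by
    intro k hk
    simp only [hΓdef, gam, hidxg k hk]
    rw [if_pos (hgS k hk)]
  have hΓl : ∀ ℓ, ℓ ∉ S → Γ ℓ = dpos (idx (nb ℓ)) (dc ℓ) := by
    intro ℓ hℓ
    simp only [hΓdef, gam]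
    rw [if_neg hℓ]
  have hΓSv : ∀ v, v ∈ S → Γ v = ((idx v : ℝ), 0) := by
    intro v hv
    simp only [hΓdef, gam]
    rw [if_pos hv]
  have hedsub : ∀ u v, u ∈ S → v ∈ S → ∀ k, k < n →
      ((u = g k ∧ v = g (k+1)) ∨ (v = g k ∧ u = g (k+1))) →
      edgeDrawn G Γ u v ⊆ shapeSet n 0 k := by
    intro u v huS hvS k hk hcase
    have hsub := edgeDrawn_sub_seg G Γ u v (hdeg1' u huS) (hdeg1' v hvS)
    intro q hq
    have hq' := hsub hq
    have hcast : ((k+1 : ℕ) : ℝ) = (k : ℝ) + 1 := by push_cast; ring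
    have hseg : q ∈ segment ℝ ((k:ℝ), (0:ℝ)) ((k:ℝ)+1, (0:ℝ)) := by
      rcases hcase with ⟨h1, h2⟩ | ⟨h1, h2⟩
      · rw [h1, h2, hΓg k (by omega), hΓg (k+1) (by omega), hcast] at hq'
        exact hq'
      · rw [h1, h2, hΓg k (by omega), hΓg (k+1) (by omega), hcast, segment_symm] at hq'
        exact hq'
    have hbox := seg_sub_box (by linarith : (k:ℝ) ≤ (k:ℝ)+1) hseg
    rw [Set.uIcc_self] at hbox
    simpa [shapeSet] using hbox
  have hEC : ∀ u v, G.Adj u v → ∃ c i, i ≤ n ∧ Desc n g Lf dc u v c i ∧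
      edgeDrawn G Γ u v ⊆ shapeSet n c i := by
    have hleafcase : ∀ s ℓ, G.Adj s ℓ → s ∈ S → ℓ ∉ S →
        ∃ (c : Fin 5) (i : ℕ), i ≤ n ∧ (c ≠ 0 ∧ (c = 3 → i = 0) ∧ (c = 4 → i = n) ∧
          Lf ℓ i ∧ dc ℓ + 1 = (c : ℕ)) ∧ s = g i ∧ edgeDrawn G Γ s ℓ ⊆ shapeSet n c i := by
      intro s ℓ hadj hsS hℓS
      have hnbℓ : nb ℓ = s := (hnbuniq ℓ hℓS s hadj.symm).symm
      obtain ⟨hgi, hile⟩ := hgidx (nb ℓ) ((hnb ℓ hℓS).2)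
      have hseq : s = g (idx (nb ℓ)) := by rw [hgi, hnbℓ]
      have hsubray : edgeDrawn G Γ s ℓ ⊆ ray (Γ s) (Γ ℓ) :=
        edgeDrawn_sub_ray G Γ s ℓ (hdeg1' s hsS) (hleaf1 ℓ hℓS)
      have hΓs : Γ s = ((idx (nb ℓ) : ℝ), 0) := by rw [hseq]; exact hΓg _ hile
      have hΓℓ : Γ ℓ = dpos (idx (nb ℓ)) (dc ℓ) := hΓl ℓ hℓS
      obtain ⟨hd3, hd2', hd3', _⟩ := hdc3 ℓ hℓS
      have hLfℓ : Lf ℓ (idx (nb ℓ)) := by simp only [hLfdef]; exact ⟨hℓS, hgi.symm⟩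
      have hd4 : dc ℓ = 0 ∨ dc ℓ = 1 ∨ dc ℓ = 2 ∨ dc ℓ = 3 := by omega
      rcases hd4 with hd | hd | hd | hd
      · refine ⟨1, idx (nb ℓ), hile, ⟨by decide, fun h => absurd h (by decide),
          fun h => absurd h (by decide), hLfℓ, by rw [hd]; rfl⟩, hseq, ?_⟩
        intro q hq
        have hmem := hsubray hq
        rw [hΓs, hΓℓ, hd] at hmem
        rw [dpos_0] at hmem
        have hray := ray_vert_up (by norm_num : (0:ℝ) ≤ 1) hmem
        simpa [shapeSet] using hray
      · refine ⟨2, idx (nb ℓ), hile, ⟨by decide, fun h => absurd h (by decide),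
          fun h => absurd h (by decide), hLfℓ, by rw [hd]; rfl⟩, hseq, ?_⟩
        intro q hq
        have hmem := hsubray hq
        rw [hΓs, hΓℓ, hd, dpos_1] at hmem
        have hray := ray_vert_down (by norm_num : (-1:ℝ) ≤ 0) hmem
        simpa [shapeSet] using hray
      · have hi0 := hd2' hd
        refine ⟨3, idx (nb ℓ), hile, ⟨by decide, fun _ => hi0,
          fun h => absurd h (by decide), hLfℓ, by rw [hd]; rfl⟩, hseq, ?_⟩
        intro q hq
        have hmem := hsubray hq
        rw [hΓs, hΓℓ, hd, dpos_2] at hmem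
        have hray := ray_horiz_left
          (by linarith : (idx (nb ℓ) : ℝ) - 1 ≤ (idx (nb ℓ) : ℝ)) hmem
        rw [hi0] at hray
        simpa [shapeSet] using hray
      · have hin := hd3' hd
        refine ⟨4, idx (nb ℓ), hile, ⟨by decide, fun h => absurd h (by decide),
          fun _ => hin, hLfℓ, by rw [hd]; rfl⟩, hseq, ?_⟩
        intro q hq
        have hmem := hsubray hq
        rw [hΓs, hΓℓ, hd, dpos_3] at hmem
        have hray := ray_horiz_right
          (by linarith : (idx (nb ℓ) : ℝ) ≤ (idx (nb ℓ) : ℝ) + 1) hmem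
        rw [hin] at hray
        simpa [shapeSet] using hray
    intro u v huv
    by_cases huS : u ∈ S <;> by_cases hvS : v ∈ S
    · obtain ⟨k, hk, hcase⟩ := hclass u v huv huS hvS
      have hends : (u = g k ∧ v = g (k+1)) ∨ (v = g k ∧ u = g (k+1)) := by
        rcases hcase with ⟨h1, h2⟩ | ⟨h1, h2⟩
        · exact Or.inl ⟨h1.symm, h2.symm⟩
        · exact Or.inr ⟨h1.symm, h2.symm⟩
      exact ⟨0, k, le_of_lt hk, Or.inl ⟨rfl, hk, hends⟩, hedsub u v huS hvS k hk hends⟩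
    · obtain ⟨c, i, hi, hdata, hseq, hsub⟩ := hleafcase u v huv huS hvS
      exact ⟨c, i, hi, Or.inr ⟨hdata.1, hdata.2.1, hdata.2.2.1, v, hdata.2.2.2.1,
        hdata.2.2.2.2, Or.inl ⟨hseq, rfl⟩⟩, hsub⟩
    · obtain ⟨c, i, hi, hdata, hseq, hsub⟩ := hleafcase v u huv.symm hvS huS
      refine ⟨c, i, hi, Or.inr ⟨hdata.1, hdata.2.1, hdata.2.2.1, u, hdata.2.2.2.1,
        hdata.2.2.2.2, Or.inr ⟨hseq, rfl⟩⟩, ?_⟩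
      rw [edgeDrawn_comm]
      exact hsub
    · exact absurd (hleafnb u v huv huS) hvS
  refine ⟨Γ, ⟨⟨?_, ?_, ?_⟩, ?_⟩⟩
  · -- injectivity
    intro v w hvw
    by_cases hvS : v ∈ S <;> by_cases hwS : w ∈ S
    · rw [hΓSv v hvS, hΓSv w hwS, Prod.mk.injEq] at hvw
      have hid : idx v = idx w := Nat.cast_injective hvw.1
      have hv' := (hgidx v hvS).1
      have hw' := (hgidx w hwS).1
      rw [← hv', ← hw', hid]
    · exfalso
      rw [hΓSv v hvS, hΓl w hwS] at hvw
      obtain ⟨hd3, hd2', hd3', _⟩ := hdc3 w hwS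
      have hvle : idx v ≤ n := (hgidx v hvS).2
      have hd4 : dc w = 0 ∨ dc w = 1 ∨ dc w = 2 ∨ dc w = 3 := by omega
      rcases hd4 with hd | hd | hd | hd
      · rw [hd, dpos_0] at hvw
        have h2 := congrArg Prod.snd hvw
        norm_num at h2
      · rw [hd, dpos_1] at hvw
        have h2 := congrArg Prod.snd hvw
        norm_num at h2
      · rw [hd, dpos_2, hd2' hd] at hvw
        have h1 := congrArg Prod.fst hvw
        have hnn : (0:ℝ) ≤ (idx v : ℝ) := Nat.cast_nonneg _
        norm_num at h1
        linarith
      · rw [hd, dpos_3, hd3' hd] at hvw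
        have h1 := congrArg Prod.fst hvw
        have hc : (idx v : ℝ) ≤ (n : ℝ) := Nat.cast_le.mpr hvle
        norm_num at h1
        linarith
    · exfalso
      rw [hΓSv w hwS, hΓl v hvS] at hvw
      obtain ⟨hd3, hd2', hd3', _⟩ := hdc3 v hvS
      have hwle : idx w ≤ n := (hgidx w hwS).2
      have hd4 : dc v = 0 ∨ dc v = 1 ∨ dc v = 2 ∨ dc v = 3 := by omega
      rcases hd4 with hd | hd | hd | hd
      · rw [hd, dpos_0] at hvw
        have h2 := congrArg Prod.snd hvw
        norm_num at h2
      · rw [hd, dpos_1] at hvw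
        have h2 := congrArg Prod.snd hvw
        norm_num at h2
      · rw [hd, dpos_2, hd2' hd] at hvw
        have h1 := congrArg Prod.fst hvw
        have hnn : (0:ℝ) ≤ (idx w : ℝ) := Nat.cast_nonneg _
        norm_num at h1
        linarith
      · rw [hd, dpos_3, hd3' hd] at hvw
        have h1 := congrArg Prod.fst hvw
        have hc : (idx w : ℝ) ≤ (n : ℝ) := Nat.cast_le.mpr hwle
        norm_num at h1
        linarith
    · -- both leaves
      have hgv : g (idx (nb v)) = nb v := (hgidx (nb v) (hnb v hvS).2).1
      have hgw : g (idx (nb w)) = nb w := (hgidx (nb w) (hnb w hwS).2).1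
      obtain ⟨hdv3, hdv2', hdv3', _⟩ := hdc3 v hvS
      obtain ⟨hdw3, hdw2', hdw3', _⟩ := hdc3 w hwS
      rw [hΓl v hvS, hΓl w hwS] at hvw
      have hdv4 : dc v = 0 ∨ dc v = 1 ∨ dc v = 2 ∨ dc v = 3 := by omega
      have hdw4 : dc w = 0 ∨ dc w = 1 ∨ dc w = 2 ∨ dc w = 3 := by omega
      have key : idx (nb v) = idx (nb w) ∧ dc v = dc w := by
        have hnn : (0:ℝ) ≤ (n : ℝ) := Nat.cast_nonneg _
        rcases hdv4 with hdv | hdv | hdv | hdv <;> rcases hdw4 with hdw | hdw | hdw | hdw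
        · rw [hdv, hdw, dpos_0, dpos_0, Prod.mk.injEq] at hvw
          exact ⟨by exact_mod_cast hvw.1, hdv.trans hdw.symm⟩
        · rw [hdv, hdw, dpos_0, dpos_1, Prod.mk.injEq] at hvw
          norm_num at hvw
        · rw [hdv, hdw, dpos_0, dpos_2, Prod.mk.injEq] at hvw
          norm_num at hvw
        · rw [hdv, hdw, dpos_0, dpos_3, Prod.mk.injEq] at hvw
          norm_num at hvw
        · rw [hdv, hdw, dpos_1, dpos_0, Prod.mk.injEq] at hvw
          norm_num at hvw
        · rw [hdv, hdw, dpos_1, dpos_1, Prod.mk.injEq] at hvw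
          exact ⟨by exact_mod_cast hvw.1, hdv.trans hdw.symm⟩
        · rw [hdv, hdw, dpos_1, dpos_2, Prod.mk.injEq] at hvw
          norm_num at hvw
        · rw [hdv, hdw, dpos_1, dpos_3, Prod.mk.injEq] at hvw
          norm_num at hvw
        · rw [hdv, hdw, dpos_2, dpos_0, Prod.mk.injEq] at hvw
          norm_num at hvw
        · rw [hdv, hdw, dpos_2, dpos_1, Prod.mk.injEq] at hvw
          norm_num at hvw
        · rw [hdv, hdw, dpos_2, dpos_2, Prod.mk.injEq] at hvw
          have h1' : (idx (nb v) : ℝ) = (idx (nb w) : ℝ) := by linarith [hvw.1]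
          exact ⟨by exact_mod_cast h1', hdv.trans hdw.symm⟩
        · exfalso
          rw [hdv, hdw, dpos_2, dpos_3, hdv2' hdv, hdw3' hdw, Prod.mk.injEq] at hvw
          have h1 := hvw.1
          norm_num at h1
          linarith
        · rw [hdv, hdw, dpos_3, dpos_0, Prod.mk.injEq] at hvw
          norm_num at hvw
        · rw [hdv, hdw, dpos_3, dpos_1, Prod.mk.injEq] at hvw
          norm_num at hvw
        · exfalso
          rw [hdv, hdw, dpos_3, dpos_2, hdv3' hdv, hdw2' hdw, Prod.mk.injEq] at hvw
          have h1 := hvw.1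
          norm_num at h1
          linarith
        · rw [hdv, hdw, dpos_3, dpos_3, Prod.mk.injEq] at hvw
          have h1' : (idx (nb v) : ℝ) = (idx (nb w) : ℝ) := by linarith [hvw.1]
          exact ⟨by exact_mod_cast h1', hdv.trans hdw.symm⟩
      obtain ⟨hieq, hdceq⟩ := key
      have hnbe : nb v = nb w := by rw [← hgv, ← hgw, hieq]
      refine hLuniq v w (idx (nb v)) ?_ ?_ hdceq
      · simp only [hLfdef]
        exact ⟨hvS, hgv.symm⟩
      · simp only [hLfdef]
        refine ⟨hwS, ?_⟩
        rw [hieq]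
        exact hgw.symm
  · -- axis parallel
    intro u v huv
    by_cases huS : u ∈ S <;> by_cases hvS : v ∈ S
    · right
      obtain ⟨k, hk, hcase⟩ := hclass u v huv huS hvS
      rcases hcase with ⟨h1, h2⟩ | ⟨h1, h2⟩
      · rw [← h1, ← h2, hΓg k (by omega), hΓg (k+1) (by omega)]
      · rw [← h1, ← h2, hΓg k (by omega), hΓg (k+1) (by omega)]
    · have hnbv : nb v = u := (hnbuniq v hvS u huv.symm).symm
      have hΓu : Γ u = ((idx (nb v) : ℝ), 0) := by
        rw [hnbv]
        exact hΓSv u huS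
      have hΓv := hΓl v hvS
      obtain ⟨hd3, _, _, _⟩ := hdc3 v hvS
      have hd4 : dc v = 0 ∨ dc v = 1 ∨ dc v = 2 ∨ dc v = 3 := by omega
      rcases hd4 with hd | hd | hd | hd <;> rw [hΓu, hΓv, hd] <;> simp [dpos]
    · have hnbu : nb u = v := (hnbuniq u huS v huv).symm
      have hΓv : Γ v = ((idx (nb u) : ℝ), 0) := by
        rw [hnbu]
        exact hΓSv v hvS
      have hΓu := hΓl u huS
      obtain ⟨hd3, _, _, _⟩ := hdc3 u huS
      have hd4 : dc u = 0 ∨ dc u = 1 ∨ dc u = 2 ∨ dc u = 3 := by omega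
      rcases hd4 with hd | hd | hd | hd <;> rw [hΓu, hΓv, hd] <;> simp [dpos]
    · exact absurd (hleafnb u v huv huS) hvS
  · -- segment intersection condition
    intro u v x y huv hxy hne q hq
    obtain ⟨c, i, hi, hd1, hsub1⟩ := hEC u v huv
    obtain ⟨c', i', hi', hd2, hsub2⟩ := hEC x y hxy
    exact resolve n g Γ Lf dc hΓg hLuniq u v x y hne c c' i i' hi hi' hd1 hd2 q
      (hsub1 (seg_sub_edgeDrawn G Γ u v hq.1)) (hsub2 (seg_sub_edgeDrawn G Γ x y hq.2))
  · -- convex condition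
    intro u v x y huv hxy hne q hq
    obtain ⟨c, i, hi, hd1, hsub1⟩ := hEC u v huv
    obtain ⟨c', i', hi', hd2, hsub2⟩ := hEC x y hxy
    exact resolve n g Γ Lf dc hΓg hLuniq u v x y hne c c' i i' hi hi' hd1 hd2 q
      (hsub1 hq.1) (hsub2 hq.2)


/-- Every 4-caterpillar admits a convex rectilinear planar drawing. -/
theorem stmt4 {V : Type*} [Fintype V] (G : SimpleGraph V)
    (hcat : IsKCaterpillar 4 G) :
    HasConvexDrawing G := by
  classical
  obtain ⟨htree, hcard, ⟨a, b, p, hp, hsupp⟩, hdeg34⟩ := hcat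
  have hconn : G.Connected := htree.isConnected
  refine buildDrawing G p.length p.getVert {v | v ∈ p.support} ?_ ?_ ?_ ?_ ?_ ?_ ?_
  · exact aux_getVert_injOn p hp
  · exact fun i hi => p.adj_getVert_succ hi
  · exact fun v => SimpleGraph.Walk.mem_support_iff_exists_getVert
  · exact fun v hv => hdeg34 v ((hsupp v).mpr hv)
  · -- leaves have degree one
    intro v hv
    have h2 : ¬ 2 ≤ deg G v := fun h => hv ((hsupp v).mp h)
    have h1 : 1 ≤ deg G v := by
      rw [Nat.one_le_iff_ne_zero]
      intro h0
      have hva : v ≠ a := fun h => hv (h ▸ p.start_mem_support)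
      obtain ⟨W⟩ := hconn.preconnected v a
      have hWlen : 0 < W.length := by
        rcases Nat.eq_zero_or_pos W.length with h | h
        · exact absurd (SimpleGraph.Walk.eq_of_length_eq_zero h) hva
        · exact h
      have hadj : G.Adj v (W.getVert 1) := by
        have := W.adj_getVert_succ hWlen
        rwa [SimpleGraph.Walk.getVert_zero] at this
      have : (G.neighborSet v).Nonempty := ⟨W.getVert 1, hadj⟩
      rw [deg] at h0
      have := (Set.ncard_pos (Set.toFinite _)).mpr this
      omega
    omega
  · -- adjacent spine vertices are consecutive
    intro u v huv hu hv
    obtain ⟨i, hi, hcase⟩ := aux_edge_getVert p (aux_tree_edge htree p hp huv hu hv)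
    exact ⟨i, hi, hcase⟩
  · -- a vertex adjacent to a leaf is on the spine
    intro u w huw hu
    by_contra hw
    have hu1 : deg G u = 1 := by
      have h2 : ¬ 2 ≤ deg G u := fun h => hu ((hsupp u).mp h)
      have h1 : 1 ≤ deg G u := by
        rw [Nat.one_le_iff_ne_zero, deg]
        intro h0
        rw [Set.ncard_eq_zero (Set.toFinite _)] at h0
        have : w ∈ G.neighborSet u := huw
        rw [h0] at this
        exact this
      omega
    have hw1 : deg G w = 1 := by
      have h2 : ¬ 2 ≤ deg G w := fun h => hw ((hsupp w).mp h)
      have h1 : 1 ≤ deg G w := by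
        rw [Nat.one_le_iff_ne_zero, deg]
        intro h0
        rw [Set.ncard_eq_zero (Set.toFinite _)] at h0
        have : u ∈ G.neighborSet w := huw.symm
        rw [h0] at this
        exact this
      omega
    have hnu : G.neighborSet u = {w} := by
      obtain ⟨x, hx⟩ := Set.ncard_eq_one.mp hu1
      have : w ∈ G.neighborSet u := huw
      rw [hx] at this ⊢
      rw [Set.mem_singleton_iff] at this
      rw [this]
    have hnw : G.neighborSet w = {u} := by
      obtain ⟨x, hx⟩ := Set.ncard_eq_one.mp hw1
      have : u ∈ G.neighborSet w := huw.symm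
      rw [hx] at this ⊢
      rw [Set.mem_singleton_iff] at this
      rw [this]
    have hstay : ∀ (z₁ z₂ : V) (W : G.Walk z₁ z₂), z₁ = u ∨ z₁ = w → z₂ = u ∨ z₂ = w := by
      intro z₁ z₂ W
      induction W with
      | nil => exact fun h => h
      | cons hadj Wt ih =>
        rename_i c d e
        intro h
        apply ih
        rcases h with rfl | rfl
        · have : d ∈ G.neighborSet c := hadj
          rw [hnu] at this
          exact Or.inr this
        · have : d ∈ G.neighborSet c := hadj
          rw [hnw] at this
          exact Or.inl this
    obtain ⟨W⟩ := hconn.preconnected u a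
    have := hstay u a W (Or.inl rfl)
    rcases this with rfl | rfl
    · exact hu p.start_mem_support
    · exact hw p.start_mem_support

end TurnRegular
end

section
/- Let T be a tree with maximum degree at most 4 and no vertex of degree 2 that admits a convex rectilinear planar drawing. Then exactly one of the following holds: (i) T has no 3-fork and at most four 2-forks; or (ii) T has exactly two 3-forks and no 2-fork; or (iii) T has exactly one 3-fork and at most two 2-forks. Equivalently, the number of 2-forks of T plus twice the number of 3-forks of T is at most four. -/
open SimpleGraph

namespace TurnRegular

section Proof5

set_option linter.unusedSectionVars false

variable {V : Type*} [Fintype V] {G : SimpleGraph V} {Γ : V → ℝ × ℝ}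

lemma two_le_deg_s5 {u a b : V} (ha : G.Adj u a) (hb : G.Adj u b) (hab : a ≠ b) :
    2 ≤ deg G u := by
  have h := (Set.one_lt_ncard (Set.toFinite (G.neighborSet u))).mpr
    ⟨a, ha, b, hb, hab⟩
  exact h

lemma leaf_eq {l a b : V} (hl : deg G l = 1) (ha : G.Adj l a) (hb : G.Adj l b) : a = b := by
  by_contra h
  have := two_le_deg_s5 ha hb h
  omega

lemma seg_subset_ray (p q : ℝ × ℝ) : segment ℝ p q ⊆ ray p q := by
  rw [segment_eq_image']
  rintro x ⟨t, ht, rfl⟩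
  exact ⟨t, ht.1, rfl⟩

lemma seg_subset_edgeDrawn (a b : V) : segment ℝ (Γ a) (Γ b) ⊆ edgeDrawn G Γ a b := by
  intro p hp
  unfold edgeDrawn
  left
  split_ifs
  · exact seg_subset_ray _ _ hp
  · exact hp

lemma ray_subset_edgeDrawn (a b : V) (hb : deg G b = 1) :
    ray (Γ a) (Γ b) ⊆ edgeDrawn G Γ a b := by
  intro p hp
  unfold edgeDrawn
  left
  rw [if_pos hb]
  exact hp

/-- An edge segment avoids the extension ray of a leaf edge with no common endpoint. -/
lemma avoid_ray (hc : IsConvexRectDrawing G Γ) {v l a b : V}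
    (hvl : G.Adj v l) (hl : deg G l = 1) (hab : G.Adj a b)
    (hav : a ≠ v) (hbv : b ≠ v) (hal : a ≠ l) (hbl : b ≠ l) :
    ∀ p ∈ segment ℝ (Γ a) (Γ b), p ∉ ray (Γ v) (Γ l) := by
  intro p hps hpr
  have hne : s(a, b) ≠ s(v, l) := by
    intro h
    rw [Sym2.eq_iff] at h
    rcases h with ⟨h1, _⟩ | ⟨h1, _⟩
    · exact hav h1
    · exact hal h1
  obtain ⟨w, hw1, hw2, rfl⟩ := hc.2 a b v l hab hvl hne p
    ⟨seg_subset_edgeDrawn a b hps, ray_subset_edgeDrawn v l hl hpr⟩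
  rcases hw1 with rfl | rfl <;> rcases hw2 with h | h <;> simp_all

/-- A neighbor of `v` other than the leaf `l` is not drawn on the ray of the edge `vl`. -/
lemma nbr_not_on_ray (hc : IsConvexRectDrawing G Γ) {v l u : V}
    (hvl : G.Adj v l) (hl : deg G l = 1) (hvu : G.Adj v u) (hul : u ≠ l) :
    Γ u ∉ ray (Γ v) (Γ l) := by
  intro hmem
  have hne : s(v, u) ≠ s(v, l) := by
    intro h
    rw [Sym2.eq_iff] at h
    rcases h with ⟨_, h2⟩ | ⟨h1, _⟩
    · exact hul h2
    · exact hvl.ne h1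
  obtain ⟨w, hw1, hw2, hw3⟩ := hc.2 v u v l hvu hvl hne (Γ u)
    ⟨seg_subset_edgeDrawn v u (right_mem_segment ℝ _ _),
     ray_subset_edgeDrawn v l hl hmem⟩
  rcases hw2 with rfl | rfl
  · exact hvu.ne' (hc.1.1 hw3)
  · rcases hw1 with h | h
    · exact hvl.ne h.symm
    · exact hul h.symm

/-- Rays of leaf edges at two distinct non-leaf vertices are disjoint. -/
lemma rays_disjoint (hc : IsConvexRectDrawing G Γ) {v l v' l' : V}
    (hvv' : v ≠ v') (hv : 2 ≤ deg G v) (hv' : 2 ≤ deg G v')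
    (hvl : G.Adj v l) (hl : deg G l = 1) (hvl' : G.Adj v' l') (hl' : deg G l' = 1) :
    ∀ p ∈ ray (Γ v) (Γ l), p ∉ ray (Γ v') (Γ l') := by
  intro p hp hp'
  have hll' : l ≠ l' := by
    rintro rfl
    have := two_le_deg_s5 hvl.symm hvl'.symm hvv'
    omega
  have hne : s(v, l) ≠ s(v', l') := by
    intro h
    rw [Sym2.eq_iff] at h
    rcases h with ⟨h1, _⟩ | ⟨h1, h2⟩
    · exact hvv' h1
    · subst h1; omega
  obtain ⟨w, hw1, hw2, rfl⟩ := hc.2 v l v' l' hvl hvl' hne p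
    ⟨ray_subset_edgeDrawn v l hl hp, ray_subset_edgeDrawn v' l' hl' hp'⟩
  rcases hw1 with rfl | rfl <;> rcases hw2 with rfl | rfl
  · exact hvv' rfl
  · omega
  · omega
  · exact hll' rfl

/-- Horizontal coordinate ray at `v` in direction `σ`. -/
def rayXset (Γ : V → ℝ × ℝ) (σ : ℝ) (v : V) : Set (ℝ × ℝ) :=
  {p | p.2 = (Γ v).2 ∧ σ * (Γ v).1 ≤ σ * p.1}

/-- Vertical coordinate ray at `v` in direction `τ`. -/
def rayYset (Γ : V → ℝ × ℝ) (τ : ℝ) (v : V) : Set (ℝ × ℝ) :=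
  {p | p.1 = (Γ v).1 ∧ τ * (Γ v).2 ≤ τ * p.2}

lemma rayXset_subset {σ : ℝ} (hσ : σ = 1 ∨ σ = -1) {v l : V}
    (h2 : (Γ l).2 = (Γ v).2) (h1 : σ * (Γ v).1 < σ * (Γ l).1) :
    rayXset Γ σ v ⊆ ray (Γ v) (Γ l) := by
  rintro ⟨a, b⟩ ⟨hb, ha⟩
  simp only at hb ha
  have hne : (Γ l).1 - (Γ v).1 ≠ 0 := by
    rcases hσ with rfl | rfl <;> intro h <;> nlinarith
  refine ⟨(a - (Γ v).1) / ((Γ l).1 - (Γ v).1), ?_, ?_⟩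
  · rcases hσ with rfl | rfl
    · apply div_nonneg <;> linarith
    · rw [div_nonneg_iff]
      right
      constructor <;> linarith
  · have : (a - (Γ v).1) / ((Γ l).1 - (Γ v).1) * ((Γ l).1 - (Γ v).1) = a - (Γ v).1 :=
      div_mul_cancel₀ _ hne
    ext
    · simp only [Prod.fst_add, Prod.smul_fst, Prod.fst_sub, smul_eq_mul]
      linarith
    · simp only [Prod.snd_add, Prod.smul_snd, Prod.snd_sub, smul_eq_mul, h2, hb]
      ring

lemma rayYset_subset {τ : ℝ} (hτ : τ = 1 ∨ τ = -1) {v l : V}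
    (h1 : (Γ l).1 = (Γ v).1) (h2 : τ * (Γ v).2 < τ * (Γ l).2) :
    rayYset Γ τ v ⊆ ray (Γ v) (Γ l) := by
  rintro ⟨a, b⟩ ⟨ha, hb⟩
  simp only at hb ha
  have hne : (Γ l).2 - (Γ v).2 ≠ 0 := by
    rcases hτ with rfl | rfl <;> intro h <;> nlinarith
  refine ⟨(b - (Γ v).2) / ((Γ l).2 - (Γ v).2), ?_, ?_⟩
  · rcases hτ with rfl | rfl
    · apply div_nonneg <;> linarith
    · rw [div_nonneg_iff]
      right
      constructor <;> linarith
  · have : (b - (Γ v).2) / ((Γ l).2 - (Γ v).2) * ((Γ l).2 - (Γ v).2) = b - (Γ v).2 :=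
      div_mul_cancel₀ _ hne
    ext
    · simp only [Prod.fst_add, Prod.smul_fst, Prod.fst_sub, smul_eq_mul, h1, ha]
      ring
    · simp only [Prod.snd_add, Prod.smul_snd, Prod.snd_sub, smul_eq_mul]
      linarith

lemma mem_segment_horiz₀ {x1 x2 b y : ℝ} (h1 : x1 ≤ b) (h2 : b ≤ x2) :
    ((b, y) : ℝ × ℝ) ∈ segment ℝ (x1, y) (x2, y) := by
  rcases eq_or_lt_of_le (h1.trans h2) with rfl | hlt
  · have : b = x1 := le_antisymm h2 h1
    subst this
    exact left_mem_segment ℝ _ _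
  · rw [segment_eq_image']
    refine ⟨(b - x1) / (x2 - x1), ⟨div_nonneg (by linarith) (by linarith), ?_⟩, ?_⟩
    · rw [div_le_one (by linarith)]
      linarith
    · have : (b - x1) / (x2 - x1) * (x2 - x1) = b - x1 :=
        div_mul_cancel₀ _ (by linarith)
      ext
      · simp only [Prod.fst_add, Prod.smul_fst, Prod.fst_sub, smul_eq_mul]
        linarith
      · simp only [Prod.snd_add, Prod.smul_snd, Prod.snd_sub, smul_eq_mul]
        ring

lemma mem_segment_horiz {x1 x2 b y : ℝ}
    (h : (x1 ≤ b ∧ b ≤ x2) ∨ (x2 ≤ b ∧ b ≤ x1)) :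
    ((b, y) : ℝ × ℝ) ∈ segment ℝ (x1, y) (x2, y) := by
  rcases h with ⟨h1, h2⟩ | ⟨h1, h2⟩
  · exact mem_segment_horiz₀ h1 h2
  · rw [segment_symm]
    exact mem_segment_horiz₀ h1 h2

lemma mem_segment_vert₀ {y1 y2 b x : ℝ} (h1 : y1 ≤ b) (h2 : b ≤ y2) :
    ((x, b) : ℝ × ℝ) ∈ segment ℝ (x, y1) (x, y2) := by
  rcases eq_or_lt_of_le (h1.trans h2) with rfl | hlt
  · have : b = y1 := le_antisymm h2 h1
    subst this
    exact left_mem_segment ℝ _ _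
  · rw [segment_eq_image']
    refine ⟨(b - y1) / (y2 - y1), ⟨div_nonneg (by linarith) (by linarith), ?_⟩, ?_⟩
    · rw [div_le_one (by linarith)]
      linarith
    · have : (b - y1) / (y2 - y1) * (y2 - y1) = b - y1 :=
        div_mul_cancel₀ _ (by linarith)
      ext
      · simp only [Prod.fst_add, Prod.smul_fst, Prod.fst_sub, smul_eq_mul]
        ring
      · simp only [Prod.snd_add, Prod.smul_snd, Prod.snd_sub, smul_eq_mul]
        linarith

lemma mem_segment_vert {y1 y2 b x : ℝ}
    (h : (y1 ≤ b ∧ b ≤ y2) ∨ (y2 ≤ b ∧ b ≤ y1)) :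
    ((x, b) : ℝ × ℝ) ∈ segment ℝ (x, y1) (x, y2) := by
  rcases h with ⟨h1, h2⟩ | ⟨h1, h2⟩
  · exact mem_segment_vert₀ h1 h2
  · rw [segment_symm]
    exact mem_segment_vert₀ h1 h2

lemma between_of_sigma {σ a b c : ℝ} (hσ : σ = 1 ∨ σ = -1)
    (h1 : σ * a ≤ σ * b) (h2 : σ * b ≤ σ * c) :
    (a ≤ b ∧ b ≤ c) ∨ (c ≤ b ∧ b ≤ a) := by
  rcases hσ with rfl | rfl
  · left; constructor <;> linarith
  · right; constructor <;> linarith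

lemma dir_classify (hc : IsConvexRectDrawing G Γ) {u v : V} (hadj : G.Adj u v) :
    ((Γ u).2 = (Γ v).2 ∧ (Γ u).1 ≠ (Γ v).1) ∨ ((Γ u).1 = (Γ v).1 ∧ (Γ u).2 ≠ (Γ v).2) := by
  have hne : Γ u ≠ Γ v := fun h => hadj.ne (hc.1.1 h)
  rcases hc.1.2.1 u v hadj with h | h
  · right
    exact ⟨h, fun h2 => hne (Prod.ext h h2)⟩
  · left
    exact ⟨h, fun h1 => hne (Prod.ext h1 h)⟩

lemma no_leaf_support {v l : V} (hvl : G.Adj v l) (hl : deg G l = 1)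
    {a w : V} (q : G.Walk a w) (hv : v ∉ q.support) (hw : 2 ≤ deg G w) :
    l ∉ q.support := by
  intro hmem
  obtain ⟨q1, r, rfl⟩ := Walk.mem_support_iff_exists_append.mp hmem
  by_cases hwl : w = l
  · subst hwl; omega
  · obtain ⟨x, h', r', rfl⟩ := Walk.exists_eq_cons_of_ne (Ne.symm hwl) r
    have hx : x = v := leaf_eq hl h' hvl.symm
    subst hx
    apply hv
    rw [Walk.support_append]
    refine List.mem_append_right _ ?_
    rw [Walk.support_cons]
    exact Walk.start_mem_support r'

lemma first_step_deg {v b w : V} (hadj : G.Adj v b) (q : G.Walk b w)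
    (hvq : v ∉ q.support) (hw : 2 ≤ deg G w) : 2 ≤ deg G b := by
  by_cases hbw : b = w
  · subst hbw; exact hw
  · obtain ⟨c, h', q', rfl⟩ := Walk.exists_eq_cons_of_ne hbw q
    simp only [Walk.support_cons, List.mem_cons, not_or] at hvq
    have hcv : v ≠ c := by
      intro h
      exact hvq.2 (h ▸ Walk.start_mem_support q')
    exact two_le_deg_s5 hadj.symm h' hcv

lemma walk_quad (hc : IsConvexRectDrawing G Γ) {v l1 l2 : V} {σ τ : ℝ}
    (hσ : σ = 1 ∨ σ = -1) (hτ : τ = 1 ∨ τ = -1)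
    (hl1 : G.Adj v l1) (hd1 : deg G l1 = 1)
    (hy1 : (Γ l1).2 = (Γ v).2) (hx1 : σ * (Γ v).1 < σ * (Γ l1).1)
    (hl2 : G.Adj v l2) (hd2 : deg G l2 = 1)
    (hx2 : (Γ l2).1 = (Γ v).1) (hy2 : τ * (Γ v).2 < τ * (Γ l2).2)
    {a w : V} (q : G.Walk a w) (hv : v ∉ q.support) (h1 : l1 ∉ q.support)
    (h2 : l2 ∉ q.support)
    (ha : σ * (Γ a).1 < σ * (Γ v).1 ∨ τ * (Γ a).2 < τ * (Γ v).2) :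
    σ * (Γ w).1 < σ * (Γ v).1 ∨ τ * (Γ w).2 < τ * (Γ v).2 := by
  induction q with
  | nil => exact ha
  | @cons a b w hadj q ih =>
    simp only [Walk.support_cons, List.mem_cons, not_or] at hv h1 h2
    have hbv : b ≠ v := fun h => hv.2 (h ▸ Walk.start_mem_support q)
    have hbl1 : b ≠ l1 := fun h => h1.2 (h ▸ Walk.start_mem_support q)
    have hbl2 : b ≠ l2 := fun h => h2.2 (h ▸ Walk.start_mem_support q)
    have hav1 := avoid_ray hc hl1 hd1 hadj (Ne.symm hv.1) hbv (Ne.symm h1.1) hbl1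
    have hav2 := avoid_ray hc hl2 hd2 hadj (Ne.symm hv.1) hbv (Ne.symm h2.1) hbl2
    apply ih hv.2 h1.2 h2.2
    by_contra hnb
    push_neg at hnb
    rcases dir_classify hc hadj with ⟨hyy, _⟩ | ⟨hxx, _⟩
    · -- horizontal edge
      have hxa : σ * (Γ a).1 < σ * (Γ v).1 := by
        rcases ha with h | h
        · exact h
        · rw [hyy] at h; linarith [hnb.2]
      have hpseg : ((Γ v).1, (Γ a).2) ∈ segment ℝ (Γ a) (Γ b) := by
        have hb' : Γ b = ((Γ b).1, (Γ a).2) := by rw [hyy]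
        rw [hb']
        exact mem_segment_horiz (between_of_sigma hσ (le_of_lt hxa) hnb.1)
      have hpray : ((Γ v).1, (Γ a).2) ∈ ray (Γ v) (Γ l2) := by
        apply rayYset_subset hτ hx2 hy2
        refine ⟨rfl, ?_⟩
        show τ * (Γ v).2 ≤ τ * (Γ a).2
        rw [hyy]
        exact hnb.2
      exact hav2 _ hpseg hpray
    · -- vertical edge
      have hya : τ * (Γ a).2 < τ * (Γ v).2 := by
        rcases ha with h | h
        · rw [hxx] at h; linarith [hnb.1]
        · exact h
      have hpseg : ((Γ a).1, (Γ v).2) ∈ segment ℝ (Γ a) (Γ b) := by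
        have hb' : Γ b = ((Γ a).1, (Γ b).2) := by rw [hxx]
        rw [hb']
        exact mem_segment_vert (between_of_sigma hτ (le_of_lt hya) hnb.2)
      have hpray : ((Γ a).1, (Γ v).2) ∈ ray (Γ v) (Γ l1) := by
        apply rayXset_subset hσ hy1 hx1
        refine ⟨rfl, ?_⟩
        show σ * (Γ v).1 ≤ σ * (Γ a).1
        rw [hxx]
        exact hnb.1
      exact hav1 _ hpseg hpray

lemma walk_sideX (hc : IsConvexRectDrawing G Γ) {v l1 l2 : V} {σ : ℝ}
    (hσ : σ = 1 ∨ σ = -1)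
    (hl1 : G.Adj v l1) (hd1 : deg G l1 = 1)
    (hx1 : (Γ l1).1 = (Γ v).1) (hy1 : (Γ v).2 < (Γ l1).2)
    (hl2 : G.Adj v l2) (hd2 : deg G l2 = 1)
    (hx2 : (Γ l2).1 = (Γ v).1) (hy2 : (Γ l2).2 < (Γ v).2)
    {a w : V} (q : G.Walk a w) (hv : v ∉ q.support) (h1 : l1 ∉ q.support)
    (h2 : l2 ∉ q.support)
    (ha : σ * (Γ a).1 < σ * (Γ v).1) : σ * (Γ w).1 < σ * (Γ v).1 := by
  induction q with
  | nil => exact ha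
  | @cons a b w hadj q ih =>
    simp only [Walk.support_cons, List.mem_cons, not_or] at hv h1 h2
    have hbv : b ≠ v := fun h => hv.2 (h ▸ Walk.start_mem_support q)
    have hbl1 : b ≠ l1 := fun h => h1.2 (h ▸ Walk.start_mem_support q)
    have hbl2 : b ≠ l2 := fun h => h2.2 (h ▸ Walk.start_mem_support q)
    have hav1 := avoid_ray hc hl1 hd1 hadj (Ne.symm hv.1) hbv (Ne.symm h1.1) hbl1
    have hav2 := avoid_ray hc hl2 hd2 hadj (Ne.symm hv.1) hbv (Ne.symm h2.1) hbl2
    apply ih hv.2 h1.2 h2.2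
    by_contra hnb
    push_neg at hnb
    rcases dir_classify hc hadj with ⟨hyy, _⟩ | ⟨hxx, _⟩
    · -- horizontal edge
      have hpseg : ((Γ v).1, (Γ a).2) ∈ segment ℝ (Γ a) (Γ b) := by
        have hb' : Γ b = ((Γ b).1, (Γ a).2) := by rw [hyy]
        rw [hb']
        exact mem_segment_horiz (between_of_sigma hσ (le_of_lt ha) hnb)
      rcases le_total (Γ v).2 (Γ a).2 with hy | hy
      · have hpray : ((Γ v).1, (Γ a).2) ∈ ray (Γ v) (Γ l1) := by
          apply rayYset_subset (Or.inl rfl) hx1 (by rw [one_mul, one_mul]; exact hy1)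
          exact ⟨rfl, by rw [one_mul, one_mul]; exact hy⟩
        exact hav1 _ hpseg hpray
      · have hpray : ((Γ v).1, (Γ a).2) ∈ ray (Γ v) (Γ l2) := by
          apply rayYset_subset (Or.inr rfl) hx2
            (by rw [neg_one_mul, neg_one_mul]; exact neg_lt_neg hy2)
          exact ⟨rfl, by rw [neg_one_mul, neg_one_mul]; exact neg_le_neg hy⟩
        exact hav2 _ hpseg hpray
    · rw [hxx] at ha
      linarith

lemma walk_sideY (hc : IsConvexRectDrawing G Γ) {v l1 l2 : V} {τ : ℝ}
    (hτ : τ = 1 ∨ τ = -1)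
    (hl1 : G.Adj v l1) (hd1 : deg G l1 = 1)
    (hy1 : (Γ l1).2 = (Γ v).2) (hx1 : (Γ v).1 < (Γ l1).1)
    (hl2 : G.Adj v l2) (hd2 : deg G l2 = 1)
    (hy2 : (Γ l2).2 = (Γ v).2) (hx2 : (Γ l2).1 < (Γ v).1)
    {a w : V} (q : G.Walk a w) (hv : v ∉ q.support) (h1 : l1 ∉ q.support)
    (h2 : l2 ∉ q.support)
    (ha : τ * (Γ a).2 < τ * (Γ v).2) : τ * (Γ w).2 < τ * (Γ v).2 := by
  induction q with
  | nil => exact ha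
  | @cons a b w hadj q ih =>
    simp only [Walk.support_cons, List.mem_cons, not_or] at hv h1 h2
    have hbv : b ≠ v := fun h => hv.2 (h ▸ Walk.start_mem_support q)
    have hbl1 : b ≠ l1 := fun h => h1.2 (h ▸ Walk.start_mem_support q)
    have hbl2 : b ≠ l2 := fun h => h2.2 (h ▸ Walk.start_mem_support q)
    have hav1 := avoid_ray hc hl1 hd1 hadj (Ne.symm hv.1) hbv (Ne.symm h1.1) hbl1
    have hav2 := avoid_ray hc hl2 hd2 hadj (Ne.symm hv.1) hbv (Ne.symm h2.1) hbl2
    apply ih hv.2 h1.2 h2.2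
    by_contra hnb
    push_neg at hnb
    rcases dir_classify hc hadj with ⟨hyy, _⟩ | ⟨hxx, _⟩
    · rw [hyy] at ha
      linarith
    · -- vertical edge
      have hpseg : ((Γ a).1, (Γ v).2) ∈ segment ℝ (Γ a) (Γ b) := by
        have hb' : Γ b = ((Γ a).1, (Γ b).2) := by rw [hxx]
        rw [hb']
        exact mem_segment_vert (between_of_sigma hτ (le_of_lt ha) hnb)
      rcases le_total (Γ v).1 (Γ a).1 with hx | hx
      · have hpray : ((Γ a).1, (Γ v).2) ∈ ray (Γ v) (Γ l1) := by
          apply rayXset_subset (Or.inl rfl) hy1 (by rw [one_mul, one_mul]; exact hx1)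
          exact ⟨rfl, by rw [one_mul, one_mul]; exact hx⟩
        exact hav1 _ hpseg hpray
      · have hpray : ((Γ a).1, (Γ v).2) ∈ ray (Γ v) (Γ l2) := by
          apply rayXset_subset (Or.inr rfl) hy2
            (by rw [neg_one_mul, neg_one_mul]; exact neg_lt_neg hx2)
          exact ⟨rfl, by rw [neg_one_mul, neg_one_mul]; exact neg_le_neg hx⟩
        exact hav2 _ hpseg hpray

/-- Horizontal leaf ray at `v` in direction `σ`. -/
def HRX (G : SimpleGraph V) (Γ : V → ℝ × ℝ) (σ : ℝ) (v : V) : Prop :=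
  ∃ l, G.Adj v l ∧ deg G l = 1 ∧ (Γ l).2 = (Γ v).2 ∧ σ * (Γ v).1 < σ * (Γ l).1

/-- Vertical leaf ray at `v` in direction `τ`. -/
def HRY (G : SimpleGraph V) (Γ : V → ℝ × ℝ) (τ : ℝ) (v : V) : Prop :=
  ∃ l, G.Adj v l ∧ deg G l = 1 ∧ (Γ l).1 = (Γ v).1 ∧ τ * (Γ v).2 < τ * (Γ l).2

/-- All non-leaf vertices other than `v` lie strictly on the `-σ` side of `v`. -/
def SideX (G : SimpleGraph V) (Γ : V → ℝ × ℝ) (σ : ℝ) (v : V) : Prop :=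
  ∀ w, w ≠ v → 2 ≤ deg G w → σ * (Γ w).1 < σ * (Γ v).1

def SideY (G : SimpleGraph V) (Γ : V → ℝ × ℝ) (τ : ℝ) (v : V) : Prop :=
  ∀ w, w ≠ v → 2 ≤ deg G w → τ * (Γ w).2 < τ * (Γ v).2

/-- All non-leaf vertices other than `v` avoid the closed `(σ, τ)` quadrant at `v`. -/
def Blocks (G : SimpleGraph V) (Γ : V → ℝ × ℝ) (σ τ : ℝ) (v : V) : Prop :=
  ∀ w, w ≠ v → 2 ≤ deg G w → σ * (Γ w).1 < σ * (Γ v).1 ∨ τ * (Γ w).2 < τ * (Γ v).2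

/-- `v` blocks the `(σ, τ)` quadrant with a witnessing ray structure. -/
def BlocksQ (G : SimpleGraph V) (Γ : V → ℝ × ℝ) (σ τ : ℝ) (v : V) : Prop :=
  (HRX G Γ σ v ∧ HRY G Γ τ v ∧ Blocks G Γ σ τ v) ∨
  (HRY G Γ 1 v ∧ HRY G Γ (-1) v ∧ SideX G Γ σ v) ∨
  (HRX G Γ 1 v ∧ HRX G Γ (-1) v ∧ SideY G Γ τ v)

lemma blocks_of_adj_rays (hc : IsConvexRectDrawing G Γ) (hconn : G.Connected)
    {v l1 l2 : V} {σ τ : ℝ} (hσ : σ = 1 ∨ σ = -1) (hτ : τ = 1 ∨ τ = -1)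
    (hl1 : G.Adj v l1) (hd1 : deg G l1 = 1)
    (hy1 : (Γ l1).2 = (Γ v).2) (hx1 : σ * (Γ v).1 < σ * (Γ l1).1)
    (hl2 : G.Adj v l2) (hd2 : deg G l2 = 1)
    (hx2 : (Γ l2).1 = (Γ v).1) (hy2 : τ * (Γ v).2 < τ * (Γ l2).2) :
    Blocks G Γ σ τ v := by
  classical
  intro w hwv hw
  obtain ⟨p0⟩ := hconn.preconnected v w
  obtain ⟨p, hpath⟩ := p0.toPath
  revert hpath
  cases p with
  | nil => exact fun _ => absurd rfl hwv
  | @cons _ b _ hadj q =>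
    intro hpath
    have hq := (Walk.cons_isPath_iff hadj q).mp hpath
    have hb2 : 2 ≤ deg G b := first_step_deg hadj q hq.2 hw
    have hbl1 : b ≠ l1 := by rintro rfl; omega
    have hbl2 : b ≠ l2 := by rintro rfl; omega
    have hout : σ * (Γ b).1 < σ * (Γ v).1 ∨ τ * (Γ b).2 < τ * (Γ v).2 := by
      rcases dir_classify hc hadj with ⟨hyy, _⟩ | ⟨hxx, _⟩
      · left
        by_contra hle
        push_neg at hle
        exact nbr_not_on_ray hc hl1 hd1 hadj hbl1
          (rayXset_subset hσ hy1 hx1 ⟨hyy.symm, hle⟩)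
      · right
        by_contra hle
        push_neg at hle
        exact nbr_not_on_ray hc hl2 hd2 hadj hbl2
          (rayYset_subset hτ hx2 hy2 ⟨hxx.symm, hle⟩)
    exact walk_quad hc hσ hτ hl1 hd1 hy1 hx1 hl2 hd2 hx2 hy2 q hq.2
      (no_leaf_support hl1 hd1 q hq.2 hw) (no_leaf_support hl2 hd2 q hq.2 hw) hout

lemma sideX_of_oppY (hc : IsConvexRectDrawing G Γ) (hconn : G.Connected)
    {v l1 l2 : V} {σ : ℝ} (hσ : σ = 1 ∨ σ = -1)
    (hl1 : G.Adj v l1) (hd1 : deg G l1 = 1)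
    (hx1 : (Γ l1).1 = (Γ v).1) (hy1 : (Γ v).2 < (Γ l1).2)
    (hl2 : G.Adj v l2) (hd2 : deg G l2 = 1)
    (hx2 : (Γ l2).1 = (Γ v).1) (hy2 : (Γ l2).2 < (Γ v).2)
    (hnb : ∀ u, G.Adj v u → 2 ≤ deg G u → σ * (Γ u).1 < σ * (Γ v).1) :
    SideX G Γ σ v := by
  classical
  intro w hwv hw
  obtain ⟨p0⟩ := hconn.preconnected v w
  obtain ⟨p, hpath⟩ := p0.toPath
  revert hpath
  cases p with
  | nil => exact fun _ => absurd rfl hwv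
  | @cons _ b _ hadj q =>
    intro hpath
    have hq := (Walk.cons_isPath_iff hadj q).mp hpath
    have hb2 : 2 ≤ deg G b := first_step_deg hadj q hq.2 hw
    exact walk_sideX hc hσ hl1 hd1 hx1 hy1 hl2 hd2 hx2 hy2 q hq.2
      (no_leaf_support hl1 hd1 q hq.2 hw) (no_leaf_support hl2 hd2 q hq.2 hw)
      (hnb b hadj hb2)

lemma sideY_of_oppX (hc : IsConvexRectDrawing G Γ) (hconn : G.Connected)
    {v l1 l2 : V} {τ : ℝ} (hτ : τ = 1 ∨ τ = -1)
    (hl1 : G.Adj v l1) (hd1 : deg G l1 = 1)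
    (hy1 : (Γ l1).2 = (Γ v).2) (hx1 : (Γ v).1 < (Γ l1).1)
    (hl2 : G.Adj v l2) (hd2 : deg G l2 = 1)
    (hy2 : (Γ l2).2 = (Γ v).2) (hx2 : (Γ l2).1 < (Γ v).1)
    (hnb : ∀ u, G.Adj v u → 2 ≤ deg G u → τ * (Γ u).2 < τ * (Γ v).2) :
    SideY G Γ τ v := by
  classical
  intro w hwv hw
  obtain ⟨p0⟩ := hconn.preconnected v w
  obtain ⟨p, hpath⟩ := p0.toPath
  revert hpath
  cases p with
  | nil => exact fun _ => absurd rfl hwv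
  | @cons _ b _ hadj q =>
    intro hpath
    have hq := (Walk.cons_isPath_iff hadj q).mp hpath
    have hb2 : 2 ≤ deg G b := first_step_deg hadj q hq.2 hw
    exact walk_sideY hc hτ hl1 hd1 hy1 hx1 hl2 hd2 hy2 hx2 q hq.2
      (no_leaf_support hl1 hd1 q hq.2 hw) (no_leaf_support hl2 hd2 q hq.2 hw)
      (hnb b hadj hb2)

lemma not_same_dirX_aux (hc : IsConvexRectDrawing G Γ) {v a b : V} {σ : ℝ}
    (hσ : σ = 1 ∨ σ = -1) (ha : G.Adj v a) (hb : G.Adj v b) (hab : a ≠ b)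
    (hya : (Γ a).2 = (Γ v).2) (hyb : (Γ b).2 = (Γ v).2)
    (hxa : σ * (Γ v).1 < σ * (Γ a).1) (_hxb : σ * (Γ v).1 < σ * (Γ b).1)
    (hle : σ * (Γ a).1 ≤ σ * (Γ b).1) : False := by
  have hmem : Γ a ∈ segment ℝ (Γ v) (Γ b) := by
    have hb' : Γ b = ((Γ b).1, (Γ v).2) := by rw [← hyb]
    have ha' : Γ a = ((Γ a).1, (Γ v).2) := by rw [← hya]
    rw [ha', hb']
    exact mem_segment_horiz (between_of_sigma hσ (le_of_lt hxa) hle)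
  have hne : s(v, a) ≠ s(v, b) := by
    intro h
    rw [Sym2.eq_iff] at h
    rcases h with ⟨_, h2⟩ | ⟨h1, _⟩
    · exact hab h2
    · exact hb.ne h1
  obtain ⟨w, hw1, hw2, hw3⟩ := hc.1.2.2 v a v b ha hb hne (Γ a)
    ⟨right_mem_segment ℝ _ _, hmem⟩
  rcases hw1 with rfl | rfl
  · exact ha.ne' (hc.1.1 hw3)
  · rcases hw2 with h | h
    · exact ha.ne h.symm
    · exact hab h

lemma not_same_dirX (hc : IsConvexRectDrawing G Γ) {v a b : V} {σ : ℝ}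
    (hσ : σ = 1 ∨ σ = -1) (ha : G.Adj v a) (hb : G.Adj v b) (hab : a ≠ b)
    (hya : (Γ a).2 = (Γ v).2) (hyb : (Γ b).2 = (Γ v).2)
    (hxa : σ * (Γ v).1 < σ * (Γ a).1) (hxb : σ * (Γ v).1 < σ * (Γ b).1) : False := by
  rcases le_total (σ * (Γ a).1) (σ * (Γ b).1) with h | h
  · exact not_same_dirX_aux hc hσ ha hb hab hya hyb hxa hxb h
  · exact not_same_dirX_aux hc hσ hb ha hab.symm hyb hya hxb hxa h

lemma not_same_dirY_aux (hc : IsConvexRectDrawing G Γ) {v a b : V} {τ : ℝ}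
    (hτ : τ = 1 ∨ τ = -1) (ha : G.Adj v a) (hb : G.Adj v b) (hab : a ≠ b)
    (hxa : (Γ a).1 = (Γ v).1) (hxb : (Γ b).1 = (Γ v).1)
    (hya : τ * (Γ v).2 < τ * (Γ a).2) (_hyb : τ * (Γ v).2 < τ * (Γ b).2)
    (hle : τ * (Γ a).2 ≤ τ * (Γ b).2) : False := by
  have hmem : Γ a ∈ segment ℝ (Γ v) (Γ b) := by
    have hb' : Γ b = ((Γ v).1, (Γ b).2) := by rw [← hxb]
    have ha' : Γ a = ((Γ v).1, (Γ a).2) := by rw [← hxa]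
    rw [ha', hb']
    exact mem_segment_vert (between_of_sigma hτ (le_of_lt hya) hle)
  have hne : s(v, a) ≠ s(v, b) := by
    intro h
    rw [Sym2.eq_iff] at h
    rcases h with ⟨_, h2⟩ | ⟨h1, _⟩
    · exact hab h2
    · exact hb.ne h1
  obtain ⟨w, hw1, hw2, hw3⟩ := hc.1.2.2 v a v b ha hb hne (Γ a)
    ⟨right_mem_segment ℝ _ _, hmem⟩
  rcases hw1 with rfl | rfl
  · exact ha.ne' (hc.1.1 hw3)
  · rcases hw2 with h | h
    · exact ha.ne h.symm
    · exact hab h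

lemma not_same_dirY (hc : IsConvexRectDrawing G Γ) {v a b : V} {τ : ℝ}
    (hτ : τ = 1 ∨ τ = -1) (ha : G.Adj v a) (hb : G.Adj v b) (hab : a ≠ b)
    (hxa : (Γ a).1 = (Γ v).1) (hxb : (Γ b).1 = (Γ v).1)
    (hya : τ * (Γ v).2 < τ * (Γ a).2) (hyb : τ * (Γ v).2 < τ * (Γ b).2) : False := by
  rcases le_total (τ * (Γ a).2) (τ * (Γ b).2) with h | h
  · exact not_same_dirY_aux hc hτ ha hb hab hxa hxb hya hyb h
  · exact not_same_dirY_aux hc hτ hb ha hab.symm hxb hxa hyb hya h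

lemma leaf_dir (hc : IsConvexRectDrawing G Γ) {v u : V} (hadj : G.Adj v u) :
    (∃ σ : ℝ, (σ = 1 ∨ σ = -1) ∧ (Γ u).2 = (Γ v).2 ∧ σ * (Γ v).1 < σ * (Γ u).1) ∨
    (∃ τ : ℝ, (τ = 1 ∨ τ = -1) ∧ (Γ u).1 = (Γ v).1 ∧ τ * (Γ v).2 < τ * (Γ u).2) := by
  rcases dir_classify hc hadj with ⟨hy, hx⟩ | ⟨hx, hy⟩
  · left
    rcases lt_or_gt_of_ne hx with h | h
    · exact ⟨1, Or.inl rfl, hy.symm, by rw [one_mul, one_mul]; exact h⟩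
    · exact ⟨-1, Or.inr rfl, hy.symm,
        by rw [neg_one_mul, neg_one_mul]; exact neg_lt_neg h⟩
  · right
    rcases lt_or_gt_of_ne hy with h | h
    · exact ⟨1, Or.inl rfl, hx.symm, by rw [one_mul, one_mul]; exact h⟩
    · exact ⟨-1, Or.inr rfl, hx.symm,
        by rw [neg_one_mul, neg_one_mul]; exact neg_lt_neg h⟩

lemma choose_sign (a b : ℝ) : ∃ s : ℝ, (s = 1 ∨ s = -1) ∧ s * a ≤ s * b := by
  rcases le_total a b with h | h
  · exact ⟨1, Or.inl rfl, by rw [one_mul, one_mul]; exact h⟩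
  · exact ⟨-1, Or.inr rfl, by rw [neg_one_mul, neg_one_mul]; exact neg_le_neg h⟩

lemma cross (hc : IsConvexRectDrawing G Γ) {v v' : V} (hvv' : v ≠ v')
    (hv : 2 ≤ deg G v) (hv' : 2 ≤ deg G v') {σ τ : ℝ}
    (hσ : σ = 1 ∨ σ = -1) (hτ : τ = 1 ∨ τ = -1)
    (hx : HRX G Γ σ v) (hy : HRY G Γ τ v')
    (h1 : σ * (Γ v).1 ≤ σ * (Γ v').1) (h2 : τ * (Γ v').2 ≤ τ * (Γ v).2) : False := by
  obtain ⟨l, hvl, hdl, hyl, hxl⟩ := hx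
  obtain ⟨l', hvl', hdl', hxl', hyl'⟩ := hy
  have hm1 : ((Γ v').1, (Γ v).2) ∈ ray (Γ v) (Γ l) :=
    rayXset_subset hσ hyl hxl ⟨rfl, h1⟩
  have hm2 : ((Γ v').1, (Γ v).2) ∈ ray (Γ v') (Γ l') :=
    rayYset_subset hτ hxl' hyl' ⟨rfl, h2⟩
  exact rays_disjoint hc hvv' hv hv' hvl hdl hvl' hdl' _ hm1 hm2

lemma overlapY (hc : IsConvexRectDrawing G Γ) {v v' : V} (hvv' : v ≠ v')
    (hv : 2 ≤ deg G v) (hv' : 2 ≤ deg G v') {τ : ℝ} (hτ : τ = 1 ∨ τ = -1)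
    (hy : HRY G Γ τ v) (hy' : HRY G Γ τ v') (hxx : (Γ v).1 = (Γ v').1) : False := by
  obtain ⟨l, hvl, hdl, hxl, hyl⟩ := hy
  obtain ⟨l', hvl', hdl', hxl', hyl'⟩ := hy'
  have hττ : τ * τ = 1 := by rcases hτ with rfl | rfl <;> norm_num
  set M := max (τ * (Γ v).2) (τ * (Γ v').2) with hM
  have hm1 : ((Γ v).1, τ * M) ∈ ray (Γ v) (Γ l) := by
    apply rayYset_subset hτ hxl hyl
    refine ⟨rfl, ?_⟩
    show τ * (Γ v).2 ≤ τ * (τ * M)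
    rw [← mul_assoc, hττ, one_mul]
    exact le_max_left _ _
  have hm2 : ((Γ v).1, τ * M) ∈ ray (Γ v') (Γ l') := by
    apply rayYset_subset hτ hxl' hyl'
    refine ⟨hxx, ?_⟩
    show τ * (Γ v').2 ≤ τ * (τ * M)
    rw [← mul_assoc, hττ, one_mul]
    exact le_max_right _ _
  exact rays_disjoint hc hvv' hv hv' hvl hdl hvl' hdl' _ hm1 hm2

lemma clash (hc : IsConvexRectDrawing G Γ) {v v' : V} {σ τ : ℝ}
    (hσ : σ = 1 ∨ σ = -1) (hτ : τ = 1 ∨ τ = -1) (hvv' : v ≠ v')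
    (hv : 2 ≤ deg G v) (hv' : 2 ≤ deg G v')
    (h : BlocksQ G Γ σ τ v) (h' : BlocksQ G Γ σ τ v') : False := by
  have hσ0 : σ ≠ 0 := by rcases hσ with rfl | rfl <;> norm_num
  rcases h with ⟨hx, hy, hB⟩ | ⟨hy1, hy2, hSX⟩ | ⟨hx1, hx2, hSY⟩
  · rcases h' with ⟨hx', hy', hB'⟩ | ⟨hy1', hy2', hSX'⟩ | ⟨hx1', hx2', hSY'⟩
    · rcases lt_trichotomy (σ * (Γ v).1) (σ * (Γ v').1) with hlt | heq | hgt
      · rcases hB v' hvv'.symm hv' with h | h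
        · linarith
        · exact cross hc hvv' hv hv' hσ hτ hx hy' (le_of_lt hlt) (le_of_lt h)
      · exact overlapY hc hvv' hv hv' hτ hy hy' (mul_left_cancel₀ hσ0 heq)
      · rcases hB' v hvv' hv with h | h
        · linarith
        · exact cross hc hvv'.symm hv' hv hσ hτ hx' hy (le_of_lt hgt) (le_of_lt h)
    · have h1 := hSX' v hvv' hv
      obtain ⟨τ', hτ', h2⟩ := choose_sign (Γ v').2 (Γ v).2
      have hy'' : HRY G Γ τ' v' := by rcases hτ' with rfl | rfl; exacts [hy1', hy2']
      exact cross hc hvv' hv hv' hσ hτ' hx hy'' (le_of_lt h1) h2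
    · have h2 := hSY' v hvv' hv
      obtain ⟨σ', hσ', h1⟩ := choose_sign (Γ v').1 (Γ v).1
      have hx'' : HRX G Γ σ' v' := by rcases hσ' with rfl | rfl; exacts [hx1', hx2']
      exact cross hc hvv'.symm hv' hv hσ' hτ hx'' hy h1 (le_of_lt h2)
  · rcases h' with ⟨hx', hy', hB'⟩ | ⟨hy1', hy2', hSX'⟩ | ⟨hx1', hx2', hSY'⟩
    · have h1 := hSX v' hvv'.symm hv'
      obtain ⟨τ', hτ', h2⟩ := choose_sign (Γ v).2 (Γ v').2
      have hyv : HRY G Γ τ' v := by rcases hτ' with rfl | rfl; exacts [hy1, hy2]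
      exact cross hc hvv'.symm hv' hv hσ hτ' hx' hyv (le_of_lt h1) h2
    · have ha := hSX v' hvv'.symm hv'
      have hb := hSX' v hvv' hv
      linarith
    · obtain ⟨σ', hσ', h1⟩ := choose_sign (Γ v').1 (Γ v).1
      obtain ⟨τ', hτ', h2⟩ := choose_sign (Γ v).2 (Γ v').2
      have hx'' : HRX G Γ σ' v' := by rcases hσ' with rfl | rfl; exacts [hx1', hx2']
      have hy'' : HRY G Γ τ' v := by rcases hτ' with rfl | rfl; exacts [hy1, hy2]
      exact cross hc hvv'.symm hv' hv hσ' hτ' hx'' hy'' h1 h2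
  · rcases h' with ⟨hx', hy', hB'⟩ | ⟨hy1', hy2', hSX'⟩ | ⟨hx1', hx2', hSY'⟩
    · have h2 := hSY v' hvv'.symm hv'
      obtain ⟨σ', hσ', h1⟩ := choose_sign (Γ v).1 (Γ v').1
      have hx'' : HRX G Γ σ' v := by rcases hσ' with rfl | rfl; exacts [hx1, hx2]
      exact cross hc hvv' hv hv' hσ' hτ hx'' hy' h1 (le_of_lt h2)
    · obtain ⟨σ', hσ', h1⟩ := choose_sign (Γ v).1 (Γ v').1
      obtain ⟨τ', hτ', h2⟩ := choose_sign (Γ v').2 (Γ v).2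
      have hx'' : HRX G Γ σ' v := by rcases hσ' with rfl | rfl; exacts [hx1, hx2]
      have hy'' : HRY G Γ τ' v' := by rcases hτ' with rfl | rfl; exacts [hy1', hy2']
      exact cross hc hvv' hv hv' hσ' hτ' hx'' hy'' h1 h2
    · have ha := hSY v' hvv'.symm hv'
      have hb := hSY' v hvv' hv
      linarith

lemma nonleaf_unique {v : V} {L : Set V} (hL : L ⊆ G.neighborSet v)
    (hleaf : ∀ l ∈ L, deg G l = 1) (hcard : deg G v ≤ L.ncard + 1) :
    ∀ u u', G.Adj v u → 2 ≤ deg G u → G.Adj v u' → 2 ≤ deg G u' → u = u' := by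
  intro u u' hu hdu hu' hdu'
  by_contra hne
  have huL : u ∉ L := fun h => by have := hleaf u h; omega
  have huL' : u' ∉ L := fun h => by have := hleaf u' h; omega
  have hsub : insert u (insert u' L) ⊆ G.neighborSet v := by
    intro x hx
    rcases hx with rfl | hx
    · exact hu
    · rcases hx with rfl | hx
      · exact hu'
      · exact hL hx
  have h1 : (insert u (insert u' L)).ncard = L.ncard + 2 := by
    rw [Set.ncard_insert_of_notMem (by simp [hne, huL]) ((Set.toFinite L).insert u'),
      Set.ncard_insert_of_notMem huL' (Set.toFinite L)]
  have h2 : (insert u (insert u' L)).ncard ≤ (G.neighborSet v).ncard :=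
    Set.ncard_le_ncard hsub (Set.toFinite _)
  unfold deg at hcard
  omega

/-- Mechanism C: two opposite horizontal rays confine all non-leaf vertices
to one side of the horizontal line. -/
lemma mechC (hc : IsConvexRectDrawing G Γ) (hconn : G.Connected) {v lp lm : V}
    (hp : G.Adj v lp) (hdp : deg G lp = 1)
    (hyp : (Γ lp).2 = (Γ v).2) (hxp : (Γ v).1 < (Γ lp).1)
    (hm : G.Adj v lm) (hdm : deg G lm = 1)
    (hym : (Γ lm).2 = (Γ v).2) (hxm : (Γ lm).1 < (Γ v).1)
    (huniq : ∀ u u', G.Adj v u → 2 ≤ deg G u → G.Adj v u' → 2 ≤ deg G u' → u = u') :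
    ∃ τ : ℝ, (τ = 1 ∨ τ = -1) ∧ HRX G Γ 1 v ∧ HRX G Γ (-1) v ∧ SideY G Γ τ v := by
  have hrx1 : HRX G Γ 1 v := ⟨lp, hp, hdp, hyp, by rw [one_mul, one_mul]; exact hxp⟩
  have hrxm : HRX G Γ (-1) v :=
    ⟨lm, hm, hdm, hym, by rw [neg_one_mul, neg_one_mul]; exact neg_lt_neg hxm⟩
  by_cases hex : ∃ u, G.Adj v u ∧ 2 ≤ deg G u
  · obtain ⟨u3, hu3, hd3⟩ := hex
    have hul1 : u3 ≠ lp := by rintro rfl; omega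
    have hul2 : u3 ≠ lm := by rintro rfl; omega
    have hy3 : (Γ u3).2 ≠ (Γ v).2 := by
      intro h
      rcases le_total (Γ v).1 (Γ u3).1 with hcmp | hcmp
      · exact nbr_not_on_ray hc hp hdp hu3 hul1
          (rayXset_subset (Or.inl rfl) hyp (by rw [one_mul, one_mul]; exact hxp)
            ⟨h, by rw [one_mul, one_mul]; exact hcmp⟩)
      · exact nbr_not_on_ray hc hm hdm hu3 hul2
          (rayXset_subset (Or.inr rfl) hym
            (by rw [neg_one_mul, neg_one_mul]; exact neg_lt_neg hxm)
            ⟨h, by rw [neg_one_mul, neg_one_mul]; exact neg_le_neg hcmp⟩)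
    rcases lt_or_gt_of_ne hy3 with hlt | hgt
    · refine ⟨1, Or.inl rfl, hrx1, hrxm,
        sideY_of_oppX hc hconn (Or.inl rfl) hp hdp hyp hxp hm hdm hym hxm ?_⟩
      intro u hu hd
      rw [huniq u u3 hu hd hu3 hd3, one_mul, one_mul]
      exact hlt
    · refine ⟨-1, Or.inr rfl, hrx1, hrxm,
        sideY_of_oppX hc hconn (Or.inr rfl) hp hdp hyp hxp hm hdm hym hxm ?_⟩
      intro u hu hd
      rw [huniq u u3 hu hd hu3 hd3, neg_one_mul, neg_one_mul]
      exact neg_lt_neg hgt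
  · push_neg at hex
    refine ⟨1, Or.inl rfl, hrx1, hrxm,
      sideY_of_oppX hc hconn (Or.inl rfl) hp hdp hyp hxp hm hdm hym hxm ?_⟩
    intro u hu hd
    exact absurd hd (not_le.mpr (hex u hu))

/-- Mechanism B: two opposite vertical rays confine all non-leaf vertices
to one side of the vertical line. -/
lemma mechB (hc : IsConvexRectDrawing G Γ) (hconn : G.Connected) {v lp lm : V}
    (hp : G.Adj v lp) (hdp : deg G lp = 1)
    (hxp : (Γ lp).1 = (Γ v).1) (hyp : (Γ v).2 < (Γ lp).2)
    (hm : G.Adj v lm) (hdm : deg G lm = 1)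
    (hxm : (Γ lm).1 = (Γ v).1) (hym : (Γ lm).2 < (Γ v).2)
    (huniq : ∀ u u', G.Adj v u → 2 ≤ deg G u → G.Adj v u' → 2 ≤ deg G u' → u = u') :
    ∃ σ : ℝ, (σ = 1 ∨ σ = -1) ∧ HRY G Γ 1 v ∧ HRY G Γ (-1) v ∧ SideX G Γ σ v := by
  have hry1 : HRY G Γ 1 v := ⟨lp, hp, hdp, hxp, by rw [one_mul, one_mul]; exact hyp⟩
  have hrym : HRY G Γ (-1) v :=
    ⟨lm, hm, hdm, hxm, by rw [neg_one_mul, neg_one_mul]; exact neg_lt_neg hym⟩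
  by_cases hex : ∃ u, G.Adj v u ∧ 2 ≤ deg G u
  · obtain ⟨u3, hu3, hd3⟩ := hex
    have hul1 : u3 ≠ lp := by rintro rfl; omega
    have hul2 : u3 ≠ lm := by rintro rfl; omega
    have hx3 : (Γ u3).1 ≠ (Γ v).1 := by
      intro h
      rcases le_total (Γ v).2 (Γ u3).2 with hcmp | hcmp
      · exact nbr_not_on_ray hc hp hdp hu3 hul1
          (rayYset_subset (Or.inl rfl) hxp (by rw [one_mul, one_mul]; exact hyp)
            ⟨h, by rw [one_mul, one_mul]; exact hcmp⟩)
      · exact nbr_not_on_ray hc hm hdm hu3 hul2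
          (rayYset_subset (Or.inr rfl) hxm
            (by rw [neg_one_mul, neg_one_mul]; exact neg_lt_neg hym)
            ⟨h, by rw [neg_one_mul, neg_one_mul]; exact neg_le_neg hcmp⟩)
    rcases lt_or_gt_of_ne hx3 with hlt | hgt
    · refine ⟨1, Or.inl rfl, hry1, hrym,
        sideX_of_oppY hc hconn (Or.inl rfl) hp hdp hxp hyp hm hdm hxm hym ?_⟩
      intro u hu hd
      rw [huniq u u3 hu hd hu3 hd3, one_mul, one_mul]
      exact hlt
    · refine ⟨-1, Or.inr rfl, hry1, hrym,
        sideX_of_oppY hc hconn (Or.inr rfl) hp hdp hxp hyp hm hdm hxm hym ?_⟩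
      intro u hu hd
      rw [huniq u u3 hu hd hu3 hd3, neg_one_mul, neg_one_mul]
      exact neg_lt_neg hgt
  · push_neg at hex
    refine ⟨1, Or.inl rfl, hry1, hrym,
      sideX_of_oppY hc hconn (Or.inl rfl) hp hdp hxp hyp hm hdm hxm hym ?_⟩
    intro u hu hd
    exact absurd hd (not_le.mpr (hex u hu))

lemma pairX_mechC (hc : IsConvexRectDrawing G Γ) (hconn : G.Connected) {v a b : V}
    {σa σb : ℝ} (hσa : σa = 1 ∨ σa = -1) (hσb : σb = 1 ∨ σb = -1)
    (ha : G.Adj v a) (hda : deg G a = 1)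
    (hya : (Γ a).2 = (Γ v).2) (hxa : σa * (Γ v).1 < σa * (Γ a).1)
    (hb : G.Adj v b) (hdb : deg G b = 1)
    (hyb : (Γ b).2 = (Γ v).2) (hxb : σb * (Γ v).1 < σb * (Γ b).1)
    (hab : a ≠ b)
    (huniq : ∀ u u', G.Adj v u → 2 ≤ deg G u → G.Adj v u' → 2 ≤ deg G u' → u = u') :
    ∃ τ : ℝ, (τ = 1 ∨ τ = -1) ∧ HRX G Γ 1 v ∧ HRX G Γ (-1) v ∧ SideY G Γ τ v := by
  rcases hσa with rfl | rfl <;> rcases hσb with rfl | rfl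
  · exact (not_same_dirX hc (Or.inl rfl) ha hb hab hya hyb hxa hxb).elim
  · rw [one_mul, one_mul] at hxa
    rw [neg_one_mul, neg_one_mul] at hxb
    exact mechC hc hconn ha hda hya hxa hb hdb hyb (by linarith) huniq
  · rw [one_mul, one_mul] at hxb
    rw [neg_one_mul, neg_one_mul] at hxa
    exact mechC hc hconn hb hdb hyb hxb ha hda hya (by linarith) huniq
  · exact (not_same_dirX hc (Or.inr rfl) ha hb hab hya hyb hxa hxb).elim

lemma pairY_mechB (hc : IsConvexRectDrawing G Γ) (hconn : G.Connected) {v a b : V}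
    {τa τb : ℝ} (hτa : τa = 1 ∨ τa = -1) (hτb : τb = 1 ∨ τb = -1)
    (ha : G.Adj v a) (hda : deg G a = 1)
    (hxa : (Γ a).1 = (Γ v).1) (hya : τa * (Γ v).2 < τa * (Γ a).2)
    (hb : G.Adj v b) (hdb : deg G b = 1)
    (hxb : (Γ b).1 = (Γ v).1) (hyb : τb * (Γ v).2 < τb * (Γ b).2)
    (hab : a ≠ b)
    (huniq : ∀ u u', G.Adj v u → 2 ≤ deg G u → G.Adj v u' → 2 ≤ deg G u' → u = u') :
    ∃ σ : ℝ, (σ = 1 ∨ σ = -1) ∧ HRY G Γ 1 v ∧ HRY G Γ (-1) v ∧ SideX G Γ σ v := by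
  rcases hτa with rfl | rfl <;> rcases hτb with rfl | rfl
  · exact (not_same_dirY hc (Or.inl rfl) ha hb hab hxa hxb hya hyb).elim
  · rw [one_mul, one_mul] at hya
    rw [neg_one_mul, neg_one_mul] at hyb
    exact mechB hc hconn ha hda hxa hya hb hdb hxb (by linarith) huniq
  · rw [one_mul, one_mul] at hyb
    rw [neg_one_mul, neg_one_mul] at hya
    exact mechB hc hconn hb hdb hxb hyb ha hda hxa (by linarith) huniq
  · exact (not_same_dirY hc (Or.inr rfl) ha hb hab hxa hxb hya hyb).elim

lemma fork2_quad (hc : IsConvexRectDrawing G Γ) (hconn : G.Connected) {v : V}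
    (hv : IsKFork 2 G v) :
    ∃ σ τ : ℝ, (σ = 1 ∨ σ = -1) ∧ (τ = 1 ∨ τ = -1) ∧ BlocksQ G Γ σ τ v := by
  obtain ⟨hdeg, hL⟩ := hv
  obtain ⟨l1, hl1, l2, hl2, h12⟩ := (Set.one_lt_ncard (Set.toFinite _)).mp hL
  obtain ⟨hadj1, hd1⟩ := hl1
  obtain ⟨hadj2, hd2⟩ := hl2
  have huniq : ∀ u u', G.Adj v u → 2 ≤ deg G u → G.Adj v u' → 2 ≤ deg G u' → u = u' := by
    apply nonleaf_unique (L := {l1, l2})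
    · rintro x (rfl | rfl)
      exacts [hadj1, hadj2]
    · rintro x (rfl | rfl)
      exacts [hd1, hd2]
    · rw [Set.ncard_pair h12]
      omega
  rcases leaf_dir hc hadj1 with ⟨σ1, hσ1, hy1, hx1⟩ | ⟨τ1, hτ1, hx1, hy1⟩ <;>
    rcases leaf_dir hc hadj2 with ⟨σ2, hσ2, hy2, hx2⟩ | ⟨τ2, hτ2, hx2, hy2⟩
  · obtain ⟨τ, hτ, m1, m2, m3⟩ :=
      pairX_mechC hc hconn hσ1 hσ2 hadj1 hd1 hy1 hx1 hadj2 hd2 hy2 hx2 h12 huniq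
    exact ⟨1, τ, Or.inl rfl, hτ, Or.inr (Or.inr ⟨m1, m2, m3⟩)⟩
  · exact ⟨σ1, τ2, hσ1, hτ2, Or.inl ⟨⟨l1, hadj1, hd1, hy1, hx1⟩, ⟨l2, hadj2, hd2, hx2, hy2⟩,
      blocks_of_adj_rays hc hconn hσ1 hτ2 hadj1 hd1 hy1 hx1 hadj2 hd2 hx2 hy2⟩⟩
  · exact ⟨σ2, τ1, hσ2, hτ1, Or.inl ⟨⟨l2, hadj2, hd2, hy2, hx2⟩, ⟨l1, hadj1, hd1, hx1, hy1⟩,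
      blocks_of_adj_rays hc hconn hσ2 hτ1 hadj2 hd2 hy2 hx2 hadj1 hd1 hx1 hy1⟩⟩
  · obtain ⟨σ, hσ, m1, m2, m3⟩ :=
      pairY_mechB hc hconn hτ1 hτ2 hadj1 hd1 hx1 hy1 hadj2 hd2 hx2 hy2 h12 huniq
    exact ⟨σ, 1, hσ, Or.inl rfl, Or.inr (Or.inl ⟨m1, m2, m3⟩)⟩

lemma fork3_quad (hc : IsConvexRectDrawing G Γ) (hconn : G.Connected) {v : V}
    (hv : IsKFork 3 G v) :
    ∃ σ1 τ1 σ2 τ2 : ℝ, (σ1 = 1 ∨ σ1 = -1) ∧ (τ1 = 1 ∨ τ1 = -1) ∧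
      (σ2 = 1 ∨ σ2 = -1) ∧ (τ2 = 1 ∨ τ2 = -1) ∧ ¬(σ1 = σ2 ∧ τ1 = τ2) ∧
      BlocksQ G Γ σ1 τ1 v ∧ BlocksQ G Γ σ2 τ2 v := by
  obtain ⟨hdeg, hL⟩ := hv
  have hfin : ({u | G.Adj v u ∧ deg G u = 1} : Set V).Finite := Set.toFinite _
  obtain ⟨l1, hl1⟩ : ({u | G.Adj v u ∧ deg G u = 1} : Set V).Nonempty := by
    apply Set.nonempty_of_ncard_ne_zero
    omega
  obtain ⟨l2, hl2, l3, hl3, h23⟩ := (Set.one_lt_ncard (hfin.diff : ({u | G.Adj v u ∧ deg G u = 1} \ {l1}).Finite)).mp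
    (by rw [Set.ncard_diff_singleton_of_mem hl1]; omega)
  have h12 : l1 ≠ l2 := fun h => hl2.2 h.symm
  have h13 : l1 ≠ l3 := fun h => hl3.2 h.symm
  obtain ⟨hadj1, hd1⟩ := hl1
  obtain ⟨hadj2, hd2⟩ := hl2.1
  obtain ⟨hadj3, hd3⟩ := hl3.1
  have huniq : ∀ u u', G.Adj v u → 2 ≤ deg G u → G.Adj v u' → 2 ≤ deg G u' → u = u' := by
    apply nonleaf_unique (L := {l1, l2, l3})
    · rintro x (rfl | rfl | rfl)
      exacts [hadj1, hadj2, hadj3]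
    · rintro x (rfl | rfl | rfl)
      exacts [hd1, hd2, hd3]
    · have h3 : ({l1, l2, l3} : Set V).ncard = 3 := by
        rw [Set.ncard_insert_of_notMem (by simp [h12, h13]), Set.ncard_pair h23]
      omega
  have hone : (1 : ℝ) ≠ -1 := by norm_num
  rcases leaf_dir hc hadj1 with ⟨σ1, hσ1, hy1, hx1⟩ | ⟨τ1, hτ1, hx1, hy1⟩ <;>
    rcases leaf_dir hc hadj2 with ⟨σ2, hσ2, hy2, hx2⟩ | ⟨τ2, hτ2, hx2, hy2⟩ <;>
      rcases leaf_dir hc hadj3 with ⟨σ3, hσ3, hy3, hx3⟩ | ⟨τ3, hτ3, hx3, hy3⟩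
  · -- HHH : impossible
    exfalso
    rcases hσ1 with rfl | rfl <;> rcases hσ2 with rfl | rfl <;> rcases hσ3 with rfl | rfl <;>
      first
        | exact not_same_dirX hc (Or.inl rfl) hadj1 hadj2 h12 hy1 hy2 hx1 hx2
        | exact not_same_dirX hc (Or.inr rfl) hadj1 hadj2 h12 hy1 hy2 hx1 hx2
        | exact not_same_dirX hc (Or.inl rfl) hadj1 hadj3 h13 hy1 hy3 hx1 hx3
        | exact not_same_dirX hc (Or.inr rfl) hadj1 hadj3 h13 hy1 hy3 hx1 hx3
        | exact not_same_dirX hc (Or.inl rfl) hadj2 hadj3 h23 hy2 hy3 hx2 hx3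
        | exact not_same_dirX hc (Or.inr rfl) hadj2 hadj3 h23 hy2 hy3 hx2 hx3
  · -- HHV : l1, l2 horizontal
    obtain ⟨τ, hτ, m1, m2, m3⟩ :=
      pairX_mechC hc hconn hσ1 hσ2 hadj1 hd1 hy1 hx1 hadj2 hd2 hy2 hx2 h12 huniq
    exact ⟨1, τ, -1, τ, Or.inl rfl, hτ, Or.inr rfl, hτ, fun h => hone h.1,
      Or.inr (Or.inr ⟨m1, m2, m3⟩), Or.inr (Or.inr ⟨m1, m2, m3⟩)⟩
  · -- HVH : l1, l3 horizontal
    obtain ⟨τ, hτ, m1, m2, m3⟩ :=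
      pairX_mechC hc hconn hσ1 hσ3 hadj1 hd1 hy1 hx1 hadj3 hd3 hy3 hx3 h13 huniq
    exact ⟨1, τ, -1, τ, Or.inl rfl, hτ, Or.inr rfl, hτ, fun h => hone h.1,
      Or.inr (Or.inr ⟨m1, m2, m3⟩), Or.inr (Or.inr ⟨m1, m2, m3⟩)⟩
  · -- HVV : l2, l3 vertical
    obtain ⟨σ, hσ, m1, m2, m3⟩ :=
      pairY_mechB hc hconn hτ2 hτ3 hadj2 hd2 hx2 hy2 hadj3 hd3 hx3 hy3 h23 huniq
    exact ⟨σ, 1, σ, -1, hσ, Or.inl rfl, hσ, Or.inr rfl, fun h => hone h.2,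
      Or.inr (Or.inl ⟨m1, m2, m3⟩), Or.inr (Or.inl ⟨m1, m2, m3⟩)⟩
  · -- VHH : l2, l3 horizontal
    obtain ⟨τ, hτ, m1, m2, m3⟩ :=
      pairX_mechC hc hconn hσ2 hσ3 hadj2 hd2 hy2 hx2 hadj3 hd3 hy3 hx3 h23 huniq
    exact ⟨1, τ, -1, τ, Or.inl rfl, hτ, Or.inr rfl, hτ, fun h => hone h.1,
      Or.inr (Or.inr ⟨m1, m2, m3⟩), Or.inr (Or.inr ⟨m1, m2, m3⟩)⟩
  · -- VHV : l1, l3 vertical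
    obtain ⟨σ, hσ, m1, m2, m3⟩ :=
      pairY_mechB hc hconn hτ1 hτ3 hadj1 hd1 hx1 hy1 hadj3 hd3 hx3 hy3 h13 huniq
    exact ⟨σ, 1, σ, -1, hσ, Or.inl rfl, hσ, Or.inr rfl, fun h => hone h.2,
      Or.inr (Or.inl ⟨m1, m2, m3⟩), Or.inr (Or.inl ⟨m1, m2, m3⟩)⟩
  · -- VVH : l1, l2 vertical
    obtain ⟨σ, hσ, m1, m2, m3⟩ :=
      pairY_mechB hc hconn hτ1 hτ2 hadj1 hd1 hx1 hy1 hadj2 hd2 hx2 hy2 h12 huniq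
    exact ⟨σ, 1, σ, -1, hσ, Or.inl rfl, hσ, Or.inr rfl, fun h => hone h.2,
      Or.inr (Or.inl ⟨m1, m2, m3⟩), Or.inr (Or.inl ⟨m1, m2, m3⟩)⟩
  · -- VVV : impossible
    exfalso
    rcases hτ1 with rfl | rfl <;> rcases hτ2 with rfl | rfl <;> rcases hτ3 with rfl | rfl <;>
      first
        | exact not_same_dirY hc (Or.inl rfl) hadj1 hadj2 h12 hx1 hx2 hy1 hy2
        | exact not_same_dirY hc (Or.inr rfl) hadj1 hadj2 h12 hx1 hx2 hy1 hy2
        | exact not_same_dirY hc (Or.inl rfl) hadj1 hadj3 h13 hx1 hx3 hy1 hy3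
        | exact not_same_dirY hc (Or.inr rfl) hadj1 hadj3 h13 hx1 hx3 hy1 hy3
        | exact not_same_dirY hc (Or.inl rfl) hadj2 hadj3 h23 hx2 hx3 hy2 hy3
        | exact not_same_dirY hc (Or.inr rfl) hadj2 hadj3 h23 hx2 hx3 hy2 hy3

noncomputable def sgn (b : Bool) : ℝ := if b then 1 else -1

lemma sgn_cases (b : Bool) : sgn b = 1 ∨ sgn b = -1 := by
  cases b <;> simp [sgn]

lemma exists_bool {σ : ℝ} (h : σ = 1 ∨ σ = -1) : ∃ b, sgn b = σ := by
  rcases h with rfl | rfl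
  · exact ⟨true, by simp [sgn]⟩
  · exact ⟨false, by simp [sgn]⟩

end Proof5

/-- Let `T` be a tree with maximum degree at most 4 and no vertex of degree 2
that admits a convex rectilinear planar drawing. Then exactly one of the
following holds: (i) `T` has no 3-fork and at most four 2-forks; (ii) `T` has
exactly two 3-forks and no 2-fork; (iii) `T` has exactly one 3-fork and at most
two 2-forks. Equivalently, the number of 2-forks plus twice the number of
3-forks is at most four. -/
theorem stmt5 {V : Type*} [Fintype V] (G : SimpleGraph V)
    (htree : G.IsTree) (hdeg : ∀ v, deg G v ≤ 4) (hno2 : ∀ v, deg G v ≠ 2)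
    (hdraw : HasConvexDrawing G) :
    (({v | IsKFork 3 G v}.ncard = 0 ∧ {v | IsKFork 2 G v}.ncard ≤ 4) ∨
     ({v | IsKFork 3 G v}.ncard = 2 ∧ {v | IsKFork 2 G v}.ncard = 0) ∨
     ({v | IsKFork 3 G v}.ncard = 1 ∧ {v | IsKFork 2 G v}.ncard ≤ 2)) ∧
    {v | IsKFork 2 G v}.ncard + 2 * {v | IsKFork 3 G v}.ncard ≤ 4 := by
  classical
  obtain ⟨Γ, hc⟩ := hdraw
  have hconn := htree.isConnected
  have hset2 : {v | IsKFork 2 G v} = ↑(Finset.univ.filter (IsKFork 2 G)) := by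
    ext x; simp
  have hset3 : {v | IsKFork 3 G v} = ↑(Finset.univ.filter (IsKFork 3 G)) := by
    ext x; simp
  set F2 : Finset V := Finset.univ.filter (IsKFork 2 G) with hF2
  set F3 : Finset V := Finset.univ.filter (IsKFork 3 G) with hF3
  have hn2 : {v | IsKFork 2 G v}.ncard = F2.card := by
    rw [hset2, Set.ncard_coe_finset]
  have hn3 : {v | IsKFork 3 G v}.ncard = F3.card := by
    rw [hset3, Set.ncard_coe_finset]
  have main : F2.card + 2 * F3.card ≤ 4 := by
    set S : V → Finset (Bool × Bool) :=
      fun v => Finset.univ.filter (fun b => BlocksQ G Γ (sgn b.1) (sgn b.2) v) with hS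
    have hmemS : ∀ v b, b ∈ S v ↔ BlocksQ G Γ (sgn b.1) (sgn b.2) v := by
      intro v b
      simp [hS]
    have hS2 : ∀ v, IsKFork 2 G v → 1 ≤ (S v).card := by
      intro v hv
      obtain ⟨σ, τ, hσ, hτ, hB⟩ := fork2_quad hc hconn hv
      obtain ⟨b1, hb1⟩ := exists_bool hσ
      obtain ⟨b2, hb2⟩ := exists_bool hτ
      refine Finset.card_pos.mpr ⟨(b1, b2), (hmemS v (b1, b2)).mpr ?_⟩
      rw [show (b1, b2).1 = b1 from rfl, show (b1, b2).2 = b2 from rfl, hb1, hb2]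
      exact hB
    have hS3 : ∀ v, IsKFork 3 G v → 2 ≤ (S v).card := by
      intro v hv
      obtain ⟨σ1, τ1, σ2, τ2, hσ1, hτ1, hσ2, hτ2, hne, hB1, hB2⟩ := fork3_quad hc hconn hv
      obtain ⟨a1, ha1⟩ := exists_bool hσ1
      obtain ⟨b1, hb1⟩ := exists_bool hτ1
      obtain ⟨a2, ha2⟩ := exists_bool hσ2
      obtain ⟨b2, hb2⟩ := exists_bool hτ2
      refine Finset.one_lt_card.mpr ⟨(a1, b1), (hmemS v (a1, b1)).mpr ?_, (a2, b2),
        (hmemS v (a2, b2)).mpr ?_, ?_⟩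
      · rw [show (a1, b1).1 = a1 from rfl, show (a1, b1).2 = b1 from rfl, ha1, hb1]
        exact hB1
      · rw [show (a2, b2).1 = a2 from rfl, show (a2, b2).2 = b2 from rfl, ha2, hb2]
        exact hB2
      · intro h
        rw [Prod.mk.injEq] at h
        exact hne ⟨by rw [← ha1, ← ha2, h.1], by rw [← hb1, ← hb2, h.2]⟩
    have hdegfork : ∀ v ∈ F2 ∪ F3, 2 ≤ deg G v := by
      intro v hv
      rcases Finset.mem_union.mp hv with h | h
      · rw [((Finset.mem_filter.mp h).2).1]
        omega
      · rw [((Finset.mem_filter.mp h).2).1]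
        omega
    have hdisjS : ∀ v ∈ F2 ∪ F3, ∀ v' ∈ F2 ∪ F3, v ≠ v' → Disjoint (S v) (S v') := by
      intro v hvF v' hvF' hne
      rw [Finset.disjoint_left]
      intro b hb hb'
      exact clash hc (sgn_cases b.1) (sgn_cases b.2) hne (hdegfork v hvF) (hdegfork v' hvF')
        ((hmemS v b).mp hb) ((hmemS v' b).mp hb')
    have hdisj23 : Disjoint F2 F3 := by
      rw [Finset.disjoint_left]
      intro a h2 h3
      have ha2 := ((Finset.mem_filter.mp h2).2).1
      have ha3 := ((Finset.mem_filter.mp h3).2).1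
      omega
    have hweight : ∀ v ∈ F2 ∪ F3, (if IsKFork 3 G v then 2 else 1) ≤ (S v).card := by
      intro v hvF
      split_ifs with h
      · exact hS3 v h
      · refine hS2 v ?_
        rcases Finset.mem_union.mp hvF with h2 | h3
        · exact (Finset.mem_filter.mp h2).2
        · exact absurd (Finset.mem_filter.mp h3).2 h
    have hsum : ∑ v ∈ F2 ∪ F3, (if IsKFork 3 G v then 2 else 1) ≤ 4 := by
      calc ∑ v ∈ F2 ∪ F3, (if IsKFork 3 G v then 2 else 1)
          ≤ ∑ v ∈ F2 ∪ F3, (S v).card := Finset.sum_le_sum hweight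
        _ = ((F2 ∪ F3).biUnion S).card := (Finset.card_biUnion hdisjS).symm
        _ ≤ (Finset.univ : Finset (Bool × Bool)).card := Finset.card_le_univ _
        _ = 4 := by simp
    have e2 : ∑ v ∈ F2, (if IsKFork 3 G v then 2 else 1) = F2.card := by
      have h1 : ∀ v ∈ F2, (if IsKFork 3 G v then 2 else 1) = 1 := by
        intro v hv
        have h2 := (Finset.mem_filter.mp hv).2
        rw [if_neg]
        intro h3
        have e1 := h2.1
        have e2 := h3.1
        omega
      rw [Finset.sum_congr rfl h1, Finset.sum_const, smul_eq_mul, mul_one]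
    have e3 : ∑ v ∈ F3, (if IsKFork 3 G v then 2 else 1) = 2 * F3.card := by
      have h1 : ∀ v ∈ F3, (if IsKFork 3 G v then 2 else 1) = 2 := by
        intro v hv
        rw [if_pos (Finset.mem_filter.mp hv).2]
      rw [Finset.sum_congr rfl h1, Finset.sum_const, smul_eq_mul, mul_comm]
    rw [Finset.sum_union hdisj23, e2, e3] at hsum
    exact hsum
  rw [hn2, hn3]
  omega


end TurnRegular
end
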